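/- arXiv:1009.4352 — 4 statements merged into one kernel-verified Lean document; each statement's English description precedes it below -/
import Mathlib

section
/- Every integral point of the local codeword polytope satisfies the parity check: if c ∈ {0,1}^N and for every odd-cardinality S ⊆ L it holds that Σ_{i∈S} c_i − Σ_{i∈L∖S} c_i ≤ |S| − 1, then Σ_{i∈L} c_i is even. -/
theorem LCP_integral_implies_parity (N : ℕ) (L : Finset (Fin N)) (c : Fin N → ℤ)
    (hbin : ∀ i, c i = 0 ∨ c i = 1)
    (hineq : ∀ S ⊆ L, Odd S.card →
      ∑ i ∈ S, c i - ∑ i ∈ L \ S, c i ≤ (S.card : ℤ) - 1) :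
    Even (∑ i ∈ L, c i) := by
  set S : Finset (Fin N) := L.filter (fun i => c i = 1) with hS
  have hsub : S ⊆ L := Finset.filter_subset _ _
  have hsumS : ∑ i ∈ S, c i = (S.card : ℤ) := by
    rw [Finset.card_eq_sum_ones, Nat.cast_sum]
    refine Finset.sum_congr rfl fun i hi => ?_
    have := (Finset.mem_filter.mp hi).2
    simp [this]
  have hsumC : ∑ i ∈ L \ S, c i = 0 := by
    refine Finset.sum_eq_zero fun i hi => ?_
    rcases Finset.mem_sdiff.mp hi with ⟨hiL, hiS⟩
    rcases hbin i with h | h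
    · exact h
    · exact absurd (Finset.mem_filter.mpr ⟨hiL, h⟩) hiS
  have hsplit : ∑ i ∈ L, c i = (S.card : ℤ) := by
    rw [← Finset.sum_sdiff hsub, hsumC, hsumS, zero_add]
  rw [hsplit]
  by_contra hodd
  rw [Int.not_even_iff_odd, Int.odd_coe_nat] at hodd
  have := hineq S hsub hodd
  rw [hsumS, hsumC] at this
  omega
end

section
/- The local codeword polytope LCP(L) is the convex hull of the binary vectors in {0,1}^N whose restriction to L has even weight, where coordinates outside L range freely in [0,1]. -/
open Finset Set Filter Topology

namespace LCPaux

variable {N : ℕ}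

/-- The polytope (RHS). -/
def Pset (N : ℕ) (L : Finset (Fin N)) : Set (Fin N → ℝ) :=
  {c : Fin N → ℝ | (∀ i, c i ∈ Set.Icc (0 : ℝ) 1) ∧
    ∀ S ⊆ L, Odd S.card →
      ∑ i ∈ S, c i - ∑ i ∈ L \ S, c i ≤ (S.card : ℝ) - 1}

/-- The vertex set (LHS generator). -/
def Vset (N : ℕ) (L : Finset (Fin N)) : Set (Fin N → ℝ) :=
  {c : Fin N → ℝ | (∀ i, c i = 0 ∨ c i = 1) ∧
    ∃ k : ℕ, ∑ i ∈ L, c i = 2 * k}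

lemma mem_Pset {L : Finset (Fin N)} {c : Fin N → ℝ} :
    c ∈ Pset N L ↔ ((∀ i, c i ∈ Set.Icc (0 : ℝ) 1) ∧
      ∀ S ⊆ L, Odd S.card →
        ∑ i ∈ S, c i - ∑ i ∈ L \ S, c i ≤ (S.card : ℝ) - 1) := Iff.rfl

lemma sum_zero_one {α : Type*} (T : Finset α) (g : α → ℝ)
    (h : ∀ k ∈ T, g k = 0 ∨ g k = 1) : ∃ n : ℕ, ∑ k ∈ T, g k = n := by
  classical
  induction T using Finset.cons_induction with
  | empty => exact ⟨0, by simp⟩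
  | cons a T ha ih =>
    obtain ⟨n, hn⟩ := ih fun k hk => h k (Finset.mem_cons_of_mem hk)
    rcases h a (Finset.mem_cons_self a T) with h0 | h1
    · exact ⟨n, by rw [Finset.sum_cons, h0, hn, zero_add]⟩
    · exact ⟨n + 1, by rw [Finset.sum_cons, h1, hn]; push_cast; ring⟩

lemma VsubP (L : Finset (Fin N)) : Vset N L ⊆ Pset N L := by
  rintro c ⟨h01, k, hk⟩
  constructor
  · intro i; rcases h01 i with h | h <;> simp [h]
  · intro S hS hodd
    obtain ⟨a, ha⟩ := sum_zero_one S c fun k _ => h01 k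
    obtain ⟨b, hb⟩ := sum_zero_one (L \ S) c fun k _ => h01 k
    have hsplit : ∑ i ∈ L \ S, c i + ∑ i ∈ S, c i = ∑ i ∈ L, c i :=
      Finset.sum_sdiff hS
    have haS : a ≤ S.card := by
      have : (a : ℝ) ≤ S.card := by
        rw [← ha]
        calc ∑ i ∈ S, c i ≤ ∑ _i ∈ S, (1:ℝ) :=
              Finset.sum_le_sum fun i _ => by rcases h01 i with h | h <;> simp [h]
          _ = S.card := by simp
      exact_mod_cast this
    have hk2 : b + a = 2 * k := by
      have : (b : ℝ) + a = 2 * k := by rw [← ha, ← hb, hsplit, hk]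
      exact_mod_cast this
    obtain ⟨m, hm⟩ := hodd
    have key : a + 1 ≤ S.card + b := by omega
    have key' : (a : ℝ) + 1 ≤ S.card + b := by exact_mod_cast key
    rw [ha, hb]; linarith

lemma convexP (L : Finset (Fin N)) : Convex ℝ (Pset N L) := by
  intro x hx y hy a b ha hb hab
  constructor
  · intro i
    have h := (convex_Icc (0:ℝ) 1) (hx.1 i) (hy.1 i) ha hb hab
    simpa using h
  · intro S hS hodd
    have h1 := hx.2 S hS hodd
    have h2 := hy.2 S hS hodd
    have e : ∀ T : Finset (Fin N),
        ∑ i ∈ T, (a • x + b • y) i = a * ∑ i ∈ T, x i + b * ∑ i ∈ T, y i := by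
      intro T
      simp only [Pi.add_apply, Pi.smul_apply, smul_eq_mul, Finset.sum_add_distrib,
        Finset.mul_sum]
    rw [e, e]
    nlinarith [mul_le_mul_of_nonneg_left h1 ha, mul_le_mul_of_nonneg_left h2 hb]

lemma closedP (L : Finset (Fin N)) : IsClosed (Pset N L) := by
  classical
  have h1 : IsClosed {c : Fin N → ℝ | ∀ i, c i ∈ Set.Icc (0:ℝ) 1} := by
    have e : {c : Fin N → ℝ | ∀ i, c i ∈ Set.Icc (0:ℝ) 1}
        = ⋂ i, (fun c : Fin N → ℝ => c i) ⁻¹' (Set.Icc 0 1) := by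
      ext c; simp
    rw [e]
    exact isClosed_iInter fun i => isClosed_Icc.preimage (continuous_apply i)
  have h2 : IsClosed {c : Fin N → ℝ | ∀ S ⊆ L, Odd S.card →
      ∑ i ∈ S, c i - ∑ i ∈ L \ S, c i ≤ (S.card : ℝ) - 1} := by
    have e : {c : Fin N → ℝ | ∀ S ⊆ L, Odd S.card →
        ∑ i ∈ S, c i - ∑ i ∈ L \ S, c i ≤ (S.card : ℝ) - 1}
        = ⋂ S : Finset (Fin N), {c : Fin N → ℝ | S ⊆ L → Odd S.card →
            ∑ i ∈ S, c i - ∑ i ∈ L \ S, c i ≤ (S.card : ℝ) - 1} := by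
      ext c; simp [Set.mem_iInter]
    rw [e]
    refine isClosed_iInter fun S => ?_
    rcases Classical.em (S ⊆ L ∧ Odd S.card) with ⟨hS, ho⟩ | hn
    · have e2 : {c : Fin N → ℝ | S ⊆ L → Odd S.card →
          ∑ i ∈ S, c i - ∑ i ∈ L \ S, c i ≤ (S.card : ℝ) - 1}
          = {c : Fin N → ℝ | ∑ i ∈ S, c i - ∑ i ∈ L \ S, c i ≤ (S.card : ℝ) - 1} := by
        ext c; simp [hS, ho]
      rw [e2]
      exact isClosed_le
        ((continuous_finset_sum _ fun i _ => continuous_apply i).sub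
          (continuous_finset_sum _ fun i _ => continuous_apply i)) continuous_const
    · have e2 : {c : Fin N → ℝ | S ⊆ L → Odd S.card →
          ∑ i ∈ S, c i - ∑ i ∈ L \ S, c i ≤ (S.card : ℝ) - 1} = Set.univ := by
        ext c
        simp only [Set.mem_setOf_eq, Set.mem_univ, iff_true]
        intro hS ho; exact absurd ⟨hS, ho⟩ hn
      rw [e2]; exact isClosed_univ
  exact h1.inter h2

lemma compactP (L : Finset (Fin N)) : IsCompact (Pset N L) := by
  refine (isCompact_univ_pi fun _ : Fin N => isCompact_Icc (a := (0:ℝ)) (b := 1)).of_isClosed_subset (closedP L) ?_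
  intro c hc i _
  exact hc.1 i

lemma finiteV (L : Finset (Fin N)) : (Vset N L).Finite := by
  apply Set.Finite.subset (Set.Finite.pi fun _ : Fin N =>
    (Set.finite_singleton (1:ℝ)).insert 0)
  intro c hc
  simp only [Set.mem_pi, Set.mem_univ, forall_true_left, Set.mem_insert_iff,
    Set.mem_singleton_iff]
  intro i
  rcases hc.1 i with h | h <;> simp [h]

lemma sum_expand {L S : Finset (Fin N)} (c d : Fin N → ℝ) (ε : ℝ) :
    ∑ i ∈ S, (c + ε • d) i - ∑ i ∈ L \ S, (c + ε • d) i
      = (∑ i ∈ S, c i - ∑ i ∈ L \ S, c i) + ε * (∑ i ∈ S, d i - ∑ i ∈ L \ S, d i) := by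
  simp only [Pi.add_apply, Pi.smul_apply, smul_eq_mul, Finset.sum_add_distrib,
    ← Finset.mul_sum]
  ring

lemma perturb {L : Finset (Fin N)} {c d : Fin N → ℝ}
    (hc : c ∈ Pset N L)
    (hIcc : ∀ i, d i ≠ 0 → 0 < c i ∧ c i < 1)
    (htight : ∀ S ⊆ L, Odd S.card →
      (∑ i ∈ S, c i - ∑ i ∈ L \ S, c i = (S.card : ℝ) - 1) →
      ∑ i ∈ S, d i - ∑ i ∈ L \ S, d i = 0) :
    ∀ᶠ ε in 𝓝 (0:ℝ), c + ε • d ∈ Pset N L := by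
  have hA : ∀ᶠ ε in 𝓝 (0:ℝ), ∀ i, (c + ε • d) i ∈ Set.Icc (0:ℝ) 1 := by
    rw [Filter.eventually_all]
    intro i
    by_cases hdi : d i = 0
    · filter_upwards with ε
      simpa [hdi] using hc.1 i
    · obtain ⟨h0, h1⟩ := hIcc i hdi
      have hcont : Continuous fun ε : ℝ => c i + ε * d i := by continuity
      have hmem : c i + (0:ℝ) * d i ∈ Set.Ioo (0:ℝ) 1 := by
        simpa using Set.mem_Ioo.mpr ⟨h0, h1⟩
      have hx : ∀ᶠ ε in 𝓝 (0:ℝ), c i + ε * d i ∈ Set.Ioo (0:ℝ) 1 :=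
        hcont.continuousAt.eventually_mem (isOpen_Ioo.mem_nhds hmem)
      filter_upwards [hx] with ε hε
      simpa using Set.Ioo_subset_Icc_self hε
  have hB : ∀ᶠ ε in 𝓝 (0:ℝ), ∀ S : Finset (Fin N), S ⊆ L → Odd S.card →
      ∑ i ∈ S, (c + ε • d) i - ∑ i ∈ L \ S, (c + ε • d) i ≤ (S.card : ℝ) - 1 := by
    rw [Filter.eventually_all]
    intro S
    by_cases hS : S ⊆ L
    swap
    · filter_upwards with ε h; exact absurd h hS
    by_cases ho : Odd S.card
    swap
    · filter_upwards with ε _ h; exact absurd h ho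
    by_cases htt : ∑ i ∈ S, c i - ∑ i ∈ L \ S, c i = (S.card : ℝ) - 1
    · have hd0 := htight S hS ho htt
      filter_upwards with ε _ _
      rw [sum_expand, htt, hd0, mul_zero, add_zero]
    · have hlt : ∑ i ∈ S, c i - ∑ i ∈ L \ S, c i < (S.card:ℝ) - 1 :=
        lt_of_le_of_ne (hc.2 S hS ho) htt
      have hcont : Continuous fun ε : ℝ =>
          (∑ i ∈ S, c i - ∑ i ∈ L \ S, c i) + ε * (∑ i ∈ S, d i - ∑ i ∈ L \ S, d i) := by
        continuity
      have hmem : (∑ i ∈ S, c i - ∑ i ∈ L \ S, c i)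
          + (0:ℝ) * (∑ i ∈ S, d i - ∑ i ∈ L \ S, d i) ∈ Set.Iio ((S.card:ℝ) - 1) := by
        simpa using hlt
      have hx := hcont.continuousAt.eventually_mem (isOpen_Iio.mem_nhds hmem)
      filter_upwards [hx] with ε hε _ _
      rw [sum_expand]
      exact le_of_lt hε
  filter_upwards [hA, hB] with ε h1 h2
  exact ⟨h1, h2⟩

lemma extreme_dir {L : Finset (Fin N)} {c d : Fin N → ℝ}
    (hc : c ∈ (Pset N L).extremePoints ℝ)
    (hev : ∀ᶠ ε in 𝓝 (0:ℝ), c + ε • d ∈ Pset N L) : d = 0 := by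
  rw [Metric.eventually_nhds_iff] at hev
  obtain ⟨ε, hε, h⟩ := hev
  set t := ε / 2 with ht_def
  have ht : 0 < t := by positivity
  have hdist : ∀ s : ℝ, |s| = t → dist s 0 < ε := by
    intro s hs
    rw [Real.dist_eq, sub_zero, hs]
    simp only [ht_def]; linarith
  have h1 : c + t • d ∈ Pset N L := h (hdist t (abs_of_pos ht))
  have h2 : c + (-t) • d ∈ Pset N L := h (hdist (-t) (by rw [abs_neg, abs_of_pos ht]))
  have hseg : c ∈ openSegment ℝ (c + (-t) • d) (c + t • d) := by
    refine ⟨1/2, 1/2, by norm_num, by norm_num, by norm_num, ?_⟩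
    module
  have := (hc.2 h2 h1 hseg)
  have h0 : (-t) • d = 0 := by
    have := congrArg (fun x => x - c) this
    simpa [add_sub_cancel_left] using this
  rcases smul_eq_zero.mp h0 with hcon | hd
  · exfalso; rw [neg_eq_zero] at hcon; rw [hcon] at ht; exact lt_irrefl 0 ht
  · exact hd

lemma tight_sum {L S : Finset (Fin N)} {c : Fin N → ℝ} (hS : S ⊆ L)
    (ht : ∑ k ∈ S, c k - ∑ k ∈ L \ S, c k = (S.card : ℝ) - 1) :
    ∑ k ∈ L, (if k ∈ S then 1 - c k else c k) = 1 := by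
  classical
  rw [← Finset.sum_sdiff hS]
  have e1 : ∑ k ∈ L \ S, (if k ∈ S then 1 - c k else c k) = ∑ k ∈ L \ S, c k :=
    Finset.sum_congr rfl fun k hk => by rw [if_neg (Finset.mem_sdiff.mp hk).2]
  have e2 : ∑ k ∈ S, (if k ∈ S then 1 - c k else c k) = (S.card : ℝ) - ∑ k ∈ S, c k := by
    rw [Finset.sum_congr rfl fun k hk => if_pos hk, Finset.sum_sub_distrib]
    simp
  rw [e1, e2]
  linarith

lemma no_tight {L : Finset (Fin N)} {c : Fin N → ℝ} (hcI : ∀ i, c i ∈ Set.Icc (0:ℝ) 1)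
    {i : Fin N} (hi : i ∈ L) (hi0 : 0 < c i) (hi1 : c i < 1)
    (hothers : ∀ j ∈ L, j ≠ i → c j = 0 ∨ c j = 1)
    {S : Finset (Fin N)} (hS : S ⊆ L)
    (ht : ∑ k ∈ S, c k - ∑ k ∈ L \ S, c k = (S.card : ℝ) - 1) : False := by
  classical
  set f : Fin N → ℝ := fun k => if k ∈ S then 1 - c k else c k with hf
  have h1 : ∑ k ∈ L, f k = 1 := tight_sum hS ht
  have h2 : f i + ∑ k ∈ L.erase i, f k = ∑ k ∈ L, f k := Finset.add_sum_erase L f hi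
  obtain ⟨n, hn⟩ := sum_zero_one (L.erase i) f (fun k hk => by
    obtain ⟨hki, hkL⟩ := Finset.mem_erase.mp hk
    rcases hothers k hkL hki with h | h <;> by_cases hkS : k ∈ S <;>
      simp [hf, hkS, h])
  have hfi0 : 0 < f i := by
    by_cases hiS : i ∈ S
    · simp only [hf, if_pos hiS]; linarith
    · simp only [hf, if_neg hiS]; exact hi0
  have hfi1 : f i < 1 := by
    by_cases hiS : i ∈ S
    · simp only [hf, if_pos hiS]; linarith
    · simp only [hf, if_neg hiS]; exact hi1
  rw [hn, h1] at h2
  have hn1 : (n : ℝ) < 1 := by linarith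
  have hn0 : (0 : ℝ) < (n : ℝ) := by linarith
  have hnn : n = 0 := by exact_mod_cast Nat.lt_one_iff.mp (by exact_mod_cast hn1)
  rw [hnn] at hn0
  norm_num at hn0

lemma two_tight {L : Finset (Fin N)} {c : Fin N → ℝ} (hcI : ∀ i, c i ∈ Set.Icc (0:ℝ) 1)
    {i j : Fin N} (hi : i ∈ L) (hj : j ∈ L) (hij : i ≠ j)
    (hi0 : 0 < c i) (hi1 : c i < 1) (hj0 : 0 < c j) (hj1 : c j < 1)
    {S T : Finset (Fin N)} (hS : S ⊆ L) (hT : T ⊆ L)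
    (hSo : Odd S.card) (hTo : Odd T.card)
    (htS : ∑ k ∈ S, c k - ∑ k ∈ L \ S, c k = (S.card : ℝ) - 1)
    (htT : ∑ k ∈ T, c k - ∑ k ∈ L \ T, c k = (T.card : ℝ) - 1)
    (hsame : i ∈ S ↔ j ∈ S) (hopp : ¬(i ∈ T ↔ j ∈ T)) : False := by
  classical
  set fS : Fin N → ℝ := fun k => if k ∈ S then 1 - c k else c k with hfS_def
  set fT : Fin N → ℝ := fun k => if k ∈ T then 1 - c k else c k with hfT_def
  have hfS1 : ∑ k ∈ L, fS k = 1 := tight_sum hS htS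
  have hfT1 : ∑ k ∈ L, fT k = 1 := tight_sum hT htT
  set D : Finset (Fin N) := (S \ T) ∪ (T \ S) with hD_def
  have hDL : D ⊆ L := Finset.union_subset
    ((Finset.sdiff_subset).trans hS) ((Finset.sdiff_subset).trans hT)
  have hmemD : ∀ k, k ∈ D ↔ ((k ∈ S ∧ k ∉ T) ∨ (k ∈ T ∧ k ∉ S)) := by
    intro k; simp [hD_def, Finset.mem_union, Finset.mem_sdiff]
  have hfSnn : ∀ k, (0:ℝ) ≤ fS k := by
    intro k
    by_cases h : k ∈ S
    · simp only [hfS_def, if_pos h]; linarith [(hcI k).2]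
    · simp only [hfS_def, if_neg h]; exact (hcI k).1
  have hfTnn : ∀ k, (0:ℝ) ≤ fT k := by
    intro k
    by_cases h : k ∈ T
    · simp only [hfT_def, if_pos h]; linarith [(hcI k).2]
    · simp only [hfT_def, if_neg h]; exact (hcI k).1
  have hDsum : ∑ k ∈ D, (fS k + fT k) = (D.card : ℝ) := by
    rw [Finset.sum_congr rfl (fun k hk => show fS k + fT k = 1 by
      rcases (hmemD k).mp hk with ⟨h1, h2⟩ | ⟨h1, h2⟩ <;>
        simp only [hfS_def, hfT_def, if_pos h1, if_neg h2] <;> ring)]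
    simp
  have hsplit : ∑ k ∈ L \ D, (fS k + fT k) + ∑ k ∈ D, (fS k + fT k) = 2 := by
    rw [Finset.sum_sdiff hDL, Finset.sum_add_distrib, hfS1, hfT1]
    norm_num
  have hDij : (i ∈ D) ↔ ¬ (j ∈ D) := by
    rw [hmemD i, hmemD j]; tauto
  obtain ⟨p, q, hpD, hqD, hpL, hp0, hp1⟩ :
      ∃ p q, p ∉ D ∧ q ∈ D ∧ p ∈ L ∧ 0 < c p ∧ c p < 1 := by
    by_cases hiD : i ∈ D
    · exact ⟨j, i, hDij.mp hiD, hiD, hj, hj0, hj1⟩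
    · refine ⟨i, j, hiD, ?_, hi, hi0, hi1⟩
      by_contra hjD
      exact hiD (hDij.mpr hjD)
  have hone : fS p + fT p ≤ ∑ k ∈ L \ D, (fS k + fT k) :=
    Finset.single_le_sum (fun k _ => add_nonneg (hfSnn k) (hfTnn k))
      (Finset.mem_sdiff.mpr ⟨hpL, hpD⟩)
  have hfSp : 0 < fS p := by
    by_cases h : p ∈ S
    · simp only [hfS_def, if_pos h]; linarith
    · simp only [hfS_def, if_neg h]; exact hp0
  have hfTp : 0 < fT p := by
    by_cases h : p ∈ T
    · simp only [hfT_def, if_pos h]; linarith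
    · simp only [hfT_def, if_neg h]; exact hp0
  have hDlt : (D.card : ℝ) < 2 := by linarith
  have hDlt' : D.card < 2 := by exact_mod_cast hDlt
  have hD1 : 0 < D.card := Finset.card_pos.mpr ⟨q, hqD⟩
  have hc1 : (S \ T).card + (S ∩ T).card = S.card := Finset.card_sdiff_add_card_inter S T
  have hc2 : (T \ S).card + (T ∩ S).card = T.card := Finset.card_sdiff_add_card_inter T S
  have hc3 : D.card = (S \ T).card + (T \ S).card :=
    Finset.card_union_of_disjoint disjoint_sdiff_sdiff
  have hc4 : (S ∩ T).card = (T ∩ S).card := by rw [Finset.inter_comm]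
  obtain ⟨a, haa⟩ := hSo
  obtain ⟨b, hbb⟩ := hTo
  omega

lemma sum_two_ind {T : Finset (Fin N)} (i j : Fin N) (r s : ℝ) :
    ∑ k ∈ T, ((if k = i then r else 0) + (if k = j then s else 0))
      = (if i ∈ T then r else 0) + (if j ∈ T then s else 0) := by
  classical
  rw [Finset.sum_add_distrib, Finset.sum_ite_eq' T i (fun _ => r),
    Finset.sum_ite_eq' T j (fun _ => s)]

lemma extP {L : Finset (Fin N)} {c : Fin N → ℝ}
    (hc : c ∈ (Pset N L).extremePoints ℝ) : c ∈ Vset N L := by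
  classical
  have hcP : c ∈ Pset N L := hc.1
  have h01 : ∀ i, c i = 0 ∨ c i = 1 := by
    by_contra hcon
    push_neg at hcon
    obtain ⟨i, hi0, hi1⟩ := hcon
    have hio : 0 < c i := lt_of_le_of_ne (hcP.1 i).1 (Ne.symm hi0)
    have hio1 : c i < 1 := lt_of_le_of_ne (hcP.1 i).2 hi1
    by_cases hiL : i ∈ L
    · by_cases hex : ∃ j ∈ L, j ≠ i ∧ c j ≠ 0 ∧ c j ≠ 1
      · obtain ⟨j, hjL, hji, hj0, hj1⟩ := hex
        have hjo : 0 < c j := lt_of_le_of_ne (hcP.1 j).1 (Ne.symm hj0)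
        have hjo1 : c j < 1 := lt_of_le_of_ne (hcP.1 j).2 hj1
        have hij : i ≠ j := fun h => hji h.symm
        by_cases hopp : ∃ T ⊆ L, Odd T.card ∧
            (∑ k ∈ T, c k - ∑ k ∈ L \ T, c k = (T.card : ℝ) - 1) ∧ ¬(i ∈ T ↔ j ∈ T)
        · obtain ⟨T, hT, hTo, htT, hoppT⟩ := hopp
          set d : Fin N → ℝ :=
            fun k => (if k = i then 1 else 0) + (if k = j then 1 else 0) with hd
          have hIcc : ∀ k, d k ≠ 0 → 0 < c k ∧ c k < 1 := by
            intro k hk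
            by_cases h1 : k = i
            · subst h1; exact ⟨hio, hio1⟩
            · by_cases h2 : k = j
              · subst h2; exact ⟨hjo, hjo1⟩
              · exfalso; apply hk; simp [hd, h1, h2]
          have htight : ∀ S ⊆ L, Odd S.card →
              (∑ k ∈ S, c k - ∑ k ∈ L \ S, c k = (S.card : ℝ) - 1) →
              ∑ k ∈ S, d k - ∑ k ∈ L \ S, d k = 0 := by
            intro S hS hSo htS
            have hsameS : ¬(i ∈ S ↔ j ∈ S) := fun hsm =>
              two_tight hcP.1 hiL hjL hij hio hio1 hjo hjo1 hS hT hSo hTo htS htT hsm hoppT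
            have hiLS : i ∈ L \ S ↔ i ∉ S := by simp [Finset.mem_sdiff, hiL]
            have hjLS : j ∈ L \ S ↔ j ∉ S := by simp [Finset.mem_sdiff, hjL]
            rw [hd, sum_two_ind, sum_two_ind]
            by_cases hiS : i ∈ S <;> by_cases hjS : j ∈ S
            · exact absurd (iff_of_true hiS hjS) hsameS
            · rw [if_pos hiS, if_neg hjS, if_neg ((not_iff_not.mpr hiLS).mpr (not_not.mpr hiS)),
                if_pos (hjLS.mpr hjS)]
              ring
            · rw [if_neg hiS, if_pos hjS, if_pos (hiLS.mpr hiS),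
                if_neg ((not_iff_not.mpr hjLS).mpr (not_not.mpr hjS))]
              ring
            · exact absurd (iff_of_false hiS hjS) hsameS
          have hd0 : d = 0 := extreme_dir hc (perturb hcP hIcc htight)
          have : d i = 0 := by rw [hd0]; rfl
          rw [hd] at this
          simp [hij] at this
        · push_neg at hopp
          set d : Fin N → ℝ :=
            fun k => (if k = i then 1 else 0) + (if k = j then -1 else 0) with hd
          have hIcc : ∀ k, d k ≠ 0 → 0 < c k ∧ c k < 1 := by
            intro k hk
            by_cases h1 : k = i
            · subst h1; exact ⟨hio, hio1⟩
            · by_cases h2 : k = j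
              · subst h2; exact ⟨hjo, hjo1⟩
              · exfalso; apply hk; simp [hd, h1, h2]
          have htight : ∀ S ⊆ L, Odd S.card →
              (∑ k ∈ S, c k - ∑ k ∈ L \ S, c k = (S.card : ℝ) - 1) →
              ∑ k ∈ S, d k - ∑ k ∈ L \ S, d k = 0 := by
            intro S hS hSo htS
            have hsameS : i ∈ S ↔ j ∈ S := hopp S hS hSo htS
            have hiLS : i ∈ L \ S ↔ i ∉ S := by simp [Finset.mem_sdiff, hiL]
            have hjLS : j ∈ L \ S ↔ j ∉ S := by simp [Finset.mem_sdiff, hjL]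
            rw [hd, sum_two_ind, sum_two_ind]
            by_cases hiS : i ∈ S
            · have hjS : j ∈ S := hsameS.mp hiS
              rw [if_pos hiS, if_pos hjS, if_neg ((not_iff_not.mpr hiLS).mpr (not_not.mpr hiS)),
                if_neg ((not_iff_not.mpr hjLS).mpr (not_not.mpr hjS))]
              ring
            · have hjS : j ∉ S := fun h => hiS (hsameS.mpr h)
              rw [if_neg hiS, if_neg hjS, if_pos (hiLS.mpr hiS), if_pos (hjLS.mpr hjS)]
              ring
          have hd0 : d = 0 := extreme_dir hc (perturb hcP hIcc htight)
          have : d i = 0 := by rw [hd0]; rfl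
          rw [hd] at this
          simp [hij] at this
      · push_neg at hex
        have hothers : ∀ j ∈ L, j ≠ i → c j = 0 ∨ c j = 1 := by
          intro j hjL hji
          by_cases h : c j = 0
          · exact Or.inl h
          · exact Or.inr (hex j hjL hji h)
        set d : Fin N → ℝ := fun k => if k = i then 1 else 0 with hd
        have hIcc : ∀ k, d k ≠ 0 → 0 < c k ∧ c k < 1 := by
          intro k hk
          by_cases h1 : k = i
          · subst h1; exact ⟨hio, hio1⟩
          · exfalso; apply hk; simp [hd, h1]
        have htight : ∀ S ⊆ L, Odd S.card →
            (∑ k ∈ S, c k - ∑ k ∈ L \ S, c k = (S.card : ℝ) - 1) →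
            ∑ k ∈ S, d k - ∑ k ∈ L \ S, d k = 0 := by
          intro S hS _ htS
          exact (no_tight hcP.1 hiL hio hio1 hothers hS htS).elim
        have hd0 : d = 0 := extreme_dir hc (perturb hcP hIcc htight)
        have : d i = 0 := by rw [hd0]; rfl
        rw [hd] at this
        simp at this
    · set d : Fin N → ℝ := fun k => if k = i then 1 else 0 with hd
      have hIcc : ∀ k, d k ≠ 0 → 0 < c k ∧ c k < 1 := by
        intro k hk
        by_cases h1 : k = i
        · subst h1; exact ⟨hio, hio1⟩
        · exfalso; apply hk; simp [hd, h1]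
      have htight : ∀ S ⊆ L, Odd S.card →
          (∑ k ∈ S, c k - ∑ k ∈ L \ S, c k = (S.card : ℝ) - 1) →
          ∑ k ∈ S, d k - ∑ k ∈ L \ S, d k = 0 := by
        intro S hS _ _
        have e1 : ∑ k ∈ S, d k = 0 := Finset.sum_eq_zero fun k hk => by
          have : k ≠ i := fun h => hiL (hS (h ▸ hk))
          simp [hd, this]
        have e2 : ∑ k ∈ L \ S, d k = 0 := Finset.sum_eq_zero fun k hk => by
          have : k ≠ i := fun h => hiL ((Finset.mem_sdiff.mp (h ▸ hk)).1)
          simp [hd, this]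
        rw [e1, e2]; ring
      have hd0 : d = 0 := extreme_dir hc (perturb hcP hIcc htight)
      have : d i = 0 := by rw [hd0]; rfl
      rw [hd] at this
      simp at this
  refine ⟨h01, ?_⟩
  set S := L.filter (fun k => c k = 1) with hSdef
  have hS : S ⊆ L := Finset.filter_subset _ _
  have e1 : ∑ k ∈ L \ S, c k = 0 := Finset.sum_eq_zero fun k hk => by
    obtain ⟨hkL, hkS⟩ := Finset.mem_sdiff.mp hk
    rcases h01 k with h | h
    · exact h
    · exact absurd (Finset.mem_filter.mpr ⟨hkL, h⟩) hkS
  have e2 : ∑ k ∈ S, c k = (S.card : ℝ) := by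
    rw [Finset.sum_congr rfl (fun k hk => (Finset.mem_filter.mp hk).2)]
    simp
    rfl
  have hsum : ∑ k ∈ L, c k = (S.card : ℝ) := by
    rw [← Finset.sum_sdiff hS, e1, e2, zero_add]
  rcases Nat.even_or_odd S.card with he | ho
  · obtain ⟨m, hm⟩ := he
    refine ⟨m, ?_⟩
    rw [hsum, hm]
    push_cast
    ring
  · exfalso
    have hcon := hcP.2 S hS ho
    rw [e1, e2] at hcon
    linarith

end LCPaux

theorem LCP_eq_convexHull (N : ℕ) (L : Finset (Fin N)) :
    convexHull ℝ
      {c : Fin N → ℝ | (∀ i, c i = 0 ∨ c i = 1) ∧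
        ∃ k : ℕ, ∑ i ∈ L, c i = 2 * k}
    = {c : Fin N → ℝ | (∀ i, c i ∈ Set.Icc (0 : ℝ) 1) ∧
        ∀ S ⊆ L, Odd S.card →
          ∑ i ∈ S, c i - ∑ i ∈ L \ S, c i ≤ (S.card : ℝ) - 1} := by
  classical
  show convexHull ℝ (LCPaux.Vset N L) = LCPaux.Pset N L
  apply Set.Subset.antisymm
  · exact convexHull_min (LCPaux.VsubP L) (LCPaux.convexP L)
  · have h1 := closure_convexHull_extremePoints (LCPaux.compactP L) (LCPaux.convexP L)
    have h2 : (LCPaux.Pset N L).extremePoints ℝ ⊆ LCPaux.Vset N L :=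
      fun c hc => LCPaux.extP hc
    calc LCPaux.Pset N L
        = closure (convexHull ℝ ((LCPaux.Pset N L).extremePoints ℝ)) := h1.symm
      _ ⊆ closure (convexHull ℝ (LCPaux.Vset N L)) :=
          closure_mono (convexHull_mono h2)
      _ = convexHull ℝ (LCPaux.Vset N L) :=
          ((LCPaux.finiteV L).isClosed_convexHull (𝕜 := ℝ)).closure_eq
end

section
/- The tanh-product check rule: for m_1,...,m_n ∈ ℝ and K > 0, the ratio (Σ_{|B| even, j∉B} e^{-K Σ_{i∈B} m_i}) / (Σ_{|B| even, j∈B} e^{-K Σ_{i∈B} m_i}) equals (1 + l_j)/(1 − l_j)·e^{K m_j}, where l_j = ∏_{i≠j} tanh(K m_i / 2) — equivalently, the difference of soft-mins restricted to even subsets containing/excluding index j equals (1/K)·ln((1−l_j)/(1+l_j)) + m_j, provided |l_j| < 1. -/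
open Finset

private lemma prod_one_add {ι : Type*} [DecidableEq ι] (s : Finset ι) (f : ι → ℝ) :
    ∏ i ∈ s, (1 + f i) = ∑ t ∈ s.powerset, ∏ i ∈ t, f i := by
  have := Finset.prod_add f (fun _ => (1:ℝ)) s
  simp only [Finset.prod_const_one, mul_one] at this
  rw [← this]
  exact Finset.prod_congr rfl fun i _ => by ring

private lemma prod_one_sub {ι : Type*} [DecidableEq ι] (s : Finset ι) (f : ι → ℝ) :
    ∏ i ∈ s, (1 - f i) = ∑ t ∈ s.powerset, (-1) ^ t.card * ∏ i ∈ t, f i := by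
  have := Finset.prod_add (fun i => -f i) (fun _ => (1:ℝ)) s
  simp only [Finset.prod_const_one, mul_one] at this
  rw [show (∏ i ∈ s, (1 - f i)) = ∏ i ∈ s, (-f i + 1) from
    Finset.prod_congr rfl fun i _ => by ring, this]
  refine Finset.sum_congr rfl fun t _ => ?_
  rw [Finset.prod_congr rfl (fun i (_ : i ∈ t) => (neg_one_mul (f i)).symm),
    Finset.prod_mul_distrib, Finset.prod_const]

private lemma sum_even_odd {ι : Type*} [DecidableEq ι] (s : Finset ι) (f : ι → ℝ) :
    (∑ t ∈ s.powerset.filter (fun t => Even t.card), ∏ i ∈ t, f i)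
      = (∏ i ∈ s, (1 + f i) + ∏ i ∈ s, (1 - f i)) / 2 ∧
    (∑ t ∈ s.powerset.filter (fun t => ¬ Even t.card), ∏ i ∈ t, f i)
      = (∏ i ∈ s, (1 + f i) - ∏ i ∈ s, (1 - f i)) / 2 := by
  have h1 : ∏ i ∈ s, (1 + f i)
      = (∑ t ∈ s.powerset.filter (fun t => Even t.card), ∏ i ∈ t, f i)
        + ∑ t ∈ s.powerset.filter (fun t => ¬ Even t.card), ∏ i ∈ t, f i := by
    rw [_root_.prod_one_add, ← Finset.sum_filter_add_sum_filter_not s.powerset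
      (fun t => Even t.card)]
  have h2 : ∏ i ∈ s, (1 - f i)
      = (∑ t ∈ s.powerset.filter (fun t => Even t.card), ∏ i ∈ t, f i)
        - ∑ t ∈ s.powerset.filter (fun t => ¬ Even t.card), ∏ i ∈ t, f i := by
    rw [prod_one_sub, ← Finset.sum_filter_add_sum_filter_not s.powerset
      (fun t => Even t.card) (fun t => (-1:ℝ) ^ t.card * ∏ i ∈ t, f i)]
    congr 1
    · refine Finset.sum_congr rfl fun t ht => ?_
      rw [Finset.mem_filter] at ht
      rw [ht.2.neg_one_pow, one_mul]
    · rw [← Finset.sum_neg_distrib]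
      refine Finset.sum_congr rfl fun t ht => ?_
      rw [Finset.mem_filter] at ht
      rw [(Nat.not_even_iff_odd.mp ht.2).neg_one_pow]
      ring
  constructor <;> [skip; skip] <;> linarith

private lemma tanh_half (t : ℝ) :
    Real.tanh (t / 2) = (1 - Real.exp (-t)) / (1 + Real.exp (-t)) := by
  have hu : Real.exp (t/2) * Real.exp (-(t/2)) = 1 := by
    rw [← Real.exp_add]; simp
  have he : Real.exp (-t) = Real.exp (-(t/2)) * Real.exp (-(t/2)) := by
    rw [← Real.exp_add]; ring_nf
  have hden1 : Real.exp (t/2) + Real.exp (-(t/2)) ≠ 0 := by positivity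
  have hden2 : 1 + Real.exp (-t) ≠ 0 := by positivity
  have hden1' : (Real.exp (t/2) + Real.exp (-(t/2))) / 2 ≠ 0 := by positivity
  have hden2' : 1 + Real.exp (-(t/2)) * Real.exp (-(t/2)) ≠ 0 := by positivity
  rw [Real.tanh_eq_sinh_div_cosh, Real.sinh_eq, Real.cosh_eq, he,
    div_eq_div_iff hden1' hden2']
  linear_combination (Real.exp (-(t/2))) * hu

theorem tanh_product_check_rule (n : ℕ) (hn : 2 ≤ n) (K : ℝ) (hK : 0 < K)
    (m : Fin n → ℝ) (j : Fin n)
    (l : ℝ) (hl : l = ∏ i ∈ Finset.univ.erase j, Real.tanh (K * m i / 2))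
    (hl1 : |l| < 1) :
    (∑ B ∈ Finset.univ.powerset.filter
          (fun B : Finset (Fin n) => Even B.card ∧ j ∉ B),
        Real.exp (-K * ∑ i ∈ B, m i))
      / (∑ B ∈ Finset.univ.powerset.filter
          (fun B : Finset (Fin n) => Even B.card ∧ j ∈ B),
        Real.exp (-K * ∑ i ∈ B, m i))
    = (1 + l) / (1 - l) * Real.exp (K * m j) := by
  classical
  set s : Finset (Fin n) := Finset.univ.erase j with hs
  set x : Fin n → ℝ := fun i => Real.exp (-K * m i) with hx
  have hexp : ∀ B : Finset (Fin n), Real.exp (-K * ∑ i ∈ B, m i) = ∏ i ∈ B, x i := by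
    intro B
    rw [Finset.mul_sum, Real.exp_sum]
  set Pp : ℝ := ∏ i ∈ s, (1 + x i) with hPp
  set Pm : ℝ := ∏ i ∈ s, (1 - x i) with hPm
  obtain ⟨heven, hodd⟩ := sum_even_odd s x
  -- numerator
  have hNset : Finset.univ.powerset.filter
      (fun B : Finset (Fin n) => Even B.card ∧ j ∉ B)
      = s.powerset.filter (fun B => Even B.card) := by
    ext B
    simp [hs, Finset.subset_erase, and_comm]
  have hN : (∑ B ∈ Finset.univ.powerset.filter
        (fun B : Finset (Fin n) => Even B.card ∧ j ∉ B),
      Real.exp (-K * ∑ i ∈ B, m i)) = (Pp + Pm) / 2 := by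
    rw [hNset, ← heven]
    exact Finset.sum_congr rfl fun B _ => hexp B
  -- denominator
  have hD : (∑ B ∈ Finset.univ.powerset.filter
        (fun B : Finset (Fin n) => Even B.card ∧ j ∈ B),
      Real.exp (-K * ∑ i ∈ B, m i))
      = Real.exp (-K * m j) * ((Pp - Pm) / 2) := by
    rw [← hodd, Finset.mul_sum]
    refine Finset.sum_bij' (fun B _ => B.erase j) (fun A _ => insert j A)
      ?_ ?_ ?_ ?_ ?_
    · intro B hB
      simp only [Finset.mem_filter, Finset.mem_powerset] at hB ⊢
      obtain ⟨-, hBe, hjB⟩ := hB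
      constructor
      · exact Finset.erase_subset_erase j (Finset.subset_univ B)
      · rw [Finset.card_erase_of_mem hjB]
        have h0 : 1 ≤ B.card := Finset.card_pos.mpr ⟨j, hjB⟩
        exact Nat.not_even_iff_odd.mpr (Nat.Even.sub_odd h0 hBe odd_one)
    · intro A hA
      simp only [Finset.mem_filter, Finset.mem_powerset, hs, Finset.subset_erase] at hA ⊢
      obtain ⟨⟨hAu, hjA⟩, hAodd⟩ := hA
      refine ⟨Finset.subset_univ _, ?_, Finset.mem_insert_self j A⟩
      rw [Finset.card_insert_of_notMem hjA]
      rcases Nat.not_even_iff_odd.mp hAodd with ⟨k, hk⟩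
      exact ⟨k + 1, by omega⟩
    · intro B hB
      simp only [Finset.mem_filter] at hB
      exact Finset.insert_erase hB.2.2
    · intro A hA
      simp only [Finset.mem_filter, Finset.mem_powerset, hs, Finset.subset_erase] at hA
      exact Finset.erase_insert hA.1.2
    · intro B hB
      simp only [Finset.mem_filter] at hB
      rw [hexp B, ← Finset.mul_prod_erase B x hB.2.2, hx]
  -- l = Pm / Pp
  have hxpos : ∀ i, 0 < x i := fun i => Real.exp_pos _
  have hPp_pos : 0 < Pp := Finset.prod_pos fun i _ => by linarith [hxpos i]
  have hlPm : Pm = l * Pp := by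
    rw [hl]
    have : ∀ i ∈ s, Real.tanh (K * m i / 2) = (1 - x i) / (1 + x i) := by
      intro i _
      rw [tanh_half (K * m i), hx]
      simp [neg_mul]
    rw [Finset.prod_congr rfl this, Finset.prod_div_distrib, ← hPm, ← hPp,
      div_mul_cancel₀]
    exact ne_of_gt hPp_pos
  have h1l : (0:ℝ) < 1 - l := by
    have := abs_lt.mp hl1; linarith [this.2]
  have hD_ne : Real.exp (-K * m j) * ((Pp - Pm) / 2) ≠ 0 := by
    rw [hlPm]
    have : Pp - l * Pp = (1 - l) * Pp := by ring
    rw [this]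
    positivity
  have h1l' : (1:ℝ) - l ≠ 0 := ne_of_gt h1l
  have e1 : Real.exp (K * m j) * Real.exp (-K * m j) = 1 := by
    rw [← Real.exp_add]; norm_num
  rw [hN, hD, div_eq_iff hD_ne, hlPm]
  have expand : (1 + l) / (1 - l) * Real.exp (K * m j)
      * (Real.exp (-K * m j) * ((Pp - l * Pp) / 2))
      = ((1 + l) * Pp / 2) * ((1 - l) / (1 - l))
        * (Real.exp (K * m j) * Real.exp (-K * m j)) := by ring
  rw [expand, div_self h1l', e1]
  ring
end

section
/- Strong duality for the joint decoding LP: the minimum of Σ_i Σ_{e∈T_i} b_{i,e}·g_{i,e} over the (nonempty, compact) primal feasible polytope of Problem-P equals the maximum over dual variables (m, n) of Σ_j min_{B∈E_j} Σ_{i∈B} m_{i,j} + min_{e∈T_p} [Γ_{p,e} − n_{p−1,s(e)} + n_{p,s'(e)}], subject to Γ_{i,e} ≥ n_{i−1,s(e)} − n_{i,s'(e)} for all i ≠ p and n_{0,k} = n_{N,k} = 0, where Γ_{i,e} = b_{i,e} − 1[x(e)=1]·Σ_{j∈N(i)} m_{i,j}. -/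
set_option linter.unusedSectionVars false
set_option linter.unusedTactic false
set_option linter.unreachableTactic false

section FarkasLayer

open scoped InnerProductSpace

variable {H : Type*} [NormedAddCommGroup H] [InnerProductSpace ℝ H] [CompleteSpace H]
  [FiniteDimensional ℝ H]

def coneSet {ι : Type*} [Fintype ι] (v : ι → H) : Set H :=
  {z | ∃ c : ι → ℝ, (∀ i, 0 ≤ c i) ∧ z = ∑ i, c i • v i}

theorem coneSet_closed_of_li {ι : Type*} [Fintype ι] {v : ι → H}
    (hv : LinearIndependent ℝ v) : IsClosed (coneSet v) := by
  classical
  let φ : (ι → ℝ) →ₗ[ℝ] H :=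
    { toFun := fun c => ∑ i, c i • v i
      map_add' := by intro a b; simp [add_smul, Finset.sum_add_distrib]
      map_smul' := by intro r a; simp [smul_smul, Finset.smul_sum] }
  have hker : LinearMap.ker φ = ⊥ := by
    rw [LinearMap.ker_eq_bot']
    intro c hc
    funext i
    exact (Fintype.linearIndependent_iff.mp hv) c hc i
  have hemb := LinearMap.isClosedEmbedding_of_injective hker
  have horth : IsClosed {c : ι → ℝ | ∀ i, 0 ≤ c i} := by
    have : {c : ι → ℝ | ∀ i, 0 ≤ c i} = ⋂ i, {c : ι → ℝ | 0 ≤ c i} := by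
      ext c; simp [Set.mem_iInter]
    rw [this]
    exact isClosed_iInter fun i => isClosed_le continuous_const (continuous_apply i)
  have : coneSet v = φ '' {c : ι → ℝ | ∀ i, 0 ≤ c i} := by
    ext z
    constructor
    · rintro ⟨c, hc, rfl⟩; exact ⟨c, hc, rfl⟩
    · rintro ⟨c, hc, rfl⟩; exact ⟨c, hc, rfl⟩
  rw [this]
  exact hemb.isClosedMap _ horth

theorem coneSet_caratheodory {ι : Type*} [Fintype ι] [DecidableEq ι] (v : ι → H)
    {z : H} (hz : z ∈ coneSet v) :
    ∃ T : Finset ι, LinearIndependent ℝ (fun i : T => v i) ∧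
      z ∈ coneSet (fun i : T => v (i : ι)) := by
  classical
  obtain ⟨c, hc, rfl⟩ := hz
  suffices Hn : ∀ n : ℕ, ∀ c : ι → ℝ, (∀ i, 0 ≤ c i) →
      (Finset.univ.filter (fun i => c i ≠ 0)).card ≤ n →
      ∃ T : Finset ι, LinearIndependent ℝ (fun i : T => v i) ∧
        (∑ i, c i • v i) ∈ coneSet (fun i : T => v (i : ι)) by
    exact Hn _ c hc le_rfl
  intro n
  induction n with
  | zero =>
    intro c hc hcard
    refine ⟨∅, linearIndependent_empty_type, 0, by simp, ?_⟩
    have hz : ∀ i, c i = 0 := by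
      intro i
      by_contra hi
      have hmem : i ∈ Finset.univ.filter (fun i => c i ≠ 0) := by simp [hi]
      have := Finset.card_pos.mpr ⟨i, hmem⟩
      omega
    simp [hz]
  | succ n ih =>
    intro c hc hcard
    set T := Finset.univ.filter (fun i => c i ≠ 0) with hT
    have hTc : ∀ i, i ∉ T → c i = 0 := by
      intro i hi
      by_contra h
      exact hi (by simp [hT, h])
    have hsum : ∑ i, c i • v i = ∑ i ∈ T, c i • v i := by
      refine (Finset.sum_subset (Finset.subset_univ T) ?_).symm
      intro i _ hi
      rw [hTc i hi, zero_smul]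
    by_cases hli : LinearIndependent ℝ (fun i : T => v i)
    · refine ⟨T, hli, fun i : T => c i, fun i => hc i, ?_⟩
      rw [hsum, ← Finset.sum_coe_sort]
    · obtain ⟨μ₀, hμ₀sum, i₀, hi₀⟩ := Fintype.not_linearIndependent_iff.mp hli
      have key : ∀ μ : T → ℝ, (∑ i : T, μ i • v i = 0) → (∃ j, 0 < μ j) →
          ∃ T' : Finset ι, LinearIndependent ℝ (fun i : T' => v i) ∧
            (∑ i, c i • v i) ∈ coneSet (fun i : T' => v (i : ι)) := by
        rintro μ hμ ⟨j₀, hj₀⟩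
        set μ' : ι → ℝ := fun i => if h : i ∈ T then μ ⟨i, h⟩ else 0 with hμ'
        have hμ'T : ∀ i : T, μ' (i : ι) = μ i := fun i => dif_pos i.2
        have hμ'nT : ∀ i, i ∉ T → μ' i = 0 := fun i hi => dif_neg hi
        have hμ'sum : ∑ i, μ' i • v i = 0 := by
          rw [show ∑ i, μ' i • v i = ∑ i ∈ T, μ' i • v i from
            (Finset.sum_subset (Finset.subset_univ T)
              (fun i _ hi => by rw [hμ'nT i hi, zero_smul])).symm]
          rw [← Finset.sum_coe_sort]
          rw [← hμ]
          exact Finset.sum_congr rfl fun i _ => by rw [hμ'T]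
        set R := T.filter (fun i => 0 < μ' i) with hR
        have hRne : R.Nonempty := ⟨j₀, by
          simp only [hR, Finset.mem_filter]
          exact ⟨j₀.2, by rw [hμ'T]; exact hj₀⟩⟩
        set t := R.inf' hRne (fun i => c i / μ' i) with ht
        have htnn : 0 ≤ t := by
          apply Finset.le_inf'
          intro i hi
          have : 0 < μ' i := (Finset.mem_filter.mp hi).2
          exact div_nonneg (hc i) this.le
        set c' : ι → ℝ := fun i => c i - t * μ' i with hc'
        have hc'nn : ∀ i, 0 ≤ c' i := by
          intro i
          by_cases hpos : 0 < μ' i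
          · have hiR : i ∈ R := by
              refine Finset.mem_filter.mpr ⟨?_, hpos⟩
              by_contra hiT
              rw [hμ'nT i hiT] at hpos
              exact lt_irrefl 0 hpos
            have := Finset.inf'_le (fun i => c i / μ' i) hiR
            rw [← ht] at this
            have h2 : t * μ' i ≤ c i := (le_div_iff₀ hpos).mp this
            simp only [hc']
            linarith
          · push_neg at hpos
            have : t * μ' i ≤ 0 := mul_nonpos_of_nonneg_of_nonpos htnn hpos
            have := hc i
            simp only [hc']
            linarith
        have hc'sum : ∑ i, c' i • v i = ∑ i, c i • v i := by
          simp only [hc', sub_smul, Finset.sum_sub_distrib]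
          have : ∑ i, (t * μ' i) • v i = t • ∑ i, μ' i • v i := by
            rw [Finset.smul_sum]
            exact Finset.sum_congr rfl fun i _ => by rw [smul_smul]
          rw [this, hμ'sum, smul_zero, sub_zero]
        obtain ⟨i₁, hi₁R, hmin⟩ := Finset.exists_mem_eq_inf' hRne (fun i => c i / μ' i)
        have hμ'i₁ : 0 < μ' i₁ := (Finset.mem_filter.mp hi₁R).2
        have hc'i₁ : c' i₁ = 0 := by
          show c i₁ - t * μ' i₁ = 0
          rw [ht, hmin]
          rw [div_mul_cancel₀ _ hμ'i₁.ne', sub_self]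
        have hi₁T : i₁ ∈ T := (Finset.mem_filter.mp hi₁R).1
        have hsupp : Finset.univ.filter (fun i => c' i ≠ 0) ⊆ T.erase i₁ := by
          intro i hi
          simp only [Finset.mem_filter] at hi
          refine Finset.mem_erase.mpr ⟨?_, ?_⟩
          · rintro rfl; exact hi.2 hc'i₁
          · by_contra hiT
            apply hi.2
            simp only [hc', hTc i hiT, hμ'nT i hiT, mul_zero, sub_zero]
        have hcard' : (Finset.univ.filter (fun i => c' i ≠ 0)).card ≤ n := by
          have h1 := Finset.card_le_card hsupp
          have h2 : (T.erase i₁).card < T.card := Finset.card_erase_lt_of_mem hi₁T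
          omega
        obtain ⟨T', hT'li, hT'mem⟩ := ih c' hc'nn hcard'
        rw [hc'sum] at hT'mem
        exact ⟨T', hT'li, hT'mem⟩
      rcases lt_or_gt_of_ne hi₀ with hneg | hpos
      · refine key (-μ₀) ?_ ⟨i₀, by simpa using hneg⟩
        simp only [Pi.neg_apply, neg_smul, Finset.sum_neg_distrib, hμ₀sum, neg_zero]
      · exact key μ₀ hμ₀sum ⟨i₀, hpos⟩

theorem coneSet_isClosed {ι : Type*} [Fintype ι] (v : ι → H) : IsClosed (coneSet v) := by
  classical
  have : coneSet v =
      ⋃ T ∈ {T : Finset ι | LinearIndependent ℝ (fun i : T => v (i : ι))},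
        coneSet (fun i : T => v (i : ι)) := by
    ext z
    simp only [Set.mem_iUnion, Set.mem_setOf_eq]
    constructor
    · intro hz
      obtain ⟨T, hTli, hTmem⟩ := coneSet_caratheodory v hz
      exact ⟨T, hTli, hTmem⟩
    · rintro ⟨T, hTli, d, hd, rfl⟩
      refine ⟨fun i => if h : i ∈ T then d ⟨i, h⟩ else 0, ?_, ?_⟩
      · intro i
        dsimp only
        split
        · exact hd _
        · exact le_rfl
      · have h1 : ∑ i ∈ T, (if h : i ∈ T then d ⟨i, h⟩ else 0) • v i
            = ∑ i : T, d i • v (i : ι) := by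
          rw [← Finset.sum_coe_sort]
          exact Finset.sum_congr rfl fun i _ => by rw [dif_pos i.2]
        rw [show ∑ i, (if h : i ∈ T then d ⟨i, h⟩ else 0) • v i
            = ∑ i ∈ T, (if h : i ∈ T then d ⟨i, h⟩ else 0) • v i from
          (Finset.sum_subset (Finset.subset_univ T)
            (fun i _ hi => by rw [dif_neg hi, zero_smul])).symm]
        rw [h1]
  rw [this]
  exact Set.Finite.isClosed_biUnion (Set.toFinite _) fun T hT => coneSet_closed_of_li hT

theorem farkas_cone {ι : Type*} [Fintype ι] [DecidableEq ι] (v : ι → H) (b : H)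
    (hb : b ∉ coneSet v) :
    ∃ y : H, (∀ i, ⟪v i, y⟫_ℝ ≤ 0) ∧ 0 < ⟪b, y⟫_ℝ := by
  classical
  let K : ConvexCone ℝ H :=
    { carrier := coneSet v
      smul_mem' := by
        rintro r hr z ⟨c, hcnn, rfl⟩
        exact ⟨fun i => r * c i, fun i => mul_nonneg hr.le (hcnn i), by
          rw [Finset.smul_sum]; exact Finset.sum_congr rfl fun i _ => (smul_smul r (c i) (v i))⟩
      add_mem' := by
        rintro z ⟨c, hcnn, rfl⟩ z' ⟨c', hc'nn, rfl⟩
        exact ⟨fun i => c i + c' i, fun i => add_nonneg (hcnn i) (hc'nn i), by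
          rw [← Finset.sum_add_distrib]
          exact Finset.sum_congr rfl fun i _ => (add_smul (c i) (c' i) (v i)).symm⟩ }
  have hne : (K : Set H).Nonempty := ⟨0, ⟨0, fun i => le_rfl, by simp⟩⟩
  have hcl : IsClosed (K : Set H) := coneSet_isClosed v
  obtain ⟨y, hy1, hy2⟩ :=
    ProperCone.hyperplane_separation' { toSubmodule := K.toPointedCone ⟨0, fun _ => le_rfl, by simp⟩, isClosed' := hcl } hb
  refine ⟨-y, fun i => ?_, ?_⟩
  · have hvi : v i ∈ K :=
      ⟨fun j => if j = i then 1 else 0,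
        fun j => by by_cases h : j = i <;> simp [h],
        by simp [ite_smul]⟩
    have := hy1 (v i) hvi
    rw [inner_neg_right]
    linarith
  · rw [inner_neg_right, real_inner_comm]
    linarith [real_inner_comm y b]

end FarkasLayer

open scoped InnerProductSpace in
theorem lp_strong_duality {ι κ : Type*} [Fintype ι] [Fintype κ] [DecidableEq ι] [DecidableEq κ]
    (A : κ → ι → ℝ) (β : κ → ℝ) (c : ι → ℝ) (P : ℝ)
    (hP : IsLeast {y | ∃ x : ι → ℝ, (∀ i, 0 ≤ x i) ∧ (∀ k, ∑ i, A k i * x i = β k) ∧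
      y = ∑ i, c i * x i} P) :
    ∃ u : κ → ℝ, (∀ i, ∑ k, A k i * u k ≤ c i) ∧ ∑ k, β k * u k = P := by
  classical
  obtain ⟨⟨x₀, hx₀nn, hx₀feas, hx₀obj⟩, hlb⟩ := hP
  -- the space : coordinates `some k` are constraints, `none` is the objective
  set E := EuclideanSpace ℝ (Option κ) with hE
  -- generators
  set v : Option ι → E := fun o =>
    Option.elim o (WithLp.toLp 2 fun t => Option.elim t (-P) (fun k => -β k))
      (fun i => WithLp.toLp 2 fun t => Option.elim t (c i) (fun k => A k i)) with hv
  set bb : E := WithLp.toLp 2 fun t => Option.elim t (-1) (fun _ => 0) with hbb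
  have hmem : bb ∉ coneSet v := by
    rintro ⟨d, hdnn, hdsum⟩
    have happ : ∀ t : Option κ, bb t = ∑ o, d o • v o t := by
      intro t
      rw [hdsum, WithLp.ofLp_sum]
      exact Finset.sum_apply t Finset.univ _
    set lam := d none with hlam
    set x := fun i => d (some i) with hx
    have hconstr : ∀ k, ∑ i, A k i * x i = lam * β k := by
      intro k
      have := happ (some k)
      simp only [hbb, hv, PiLp.toLp_apply, Option.elim, Fintype.sum_option] at this
      -- this : 0 = d none • (-β k) + ∑ i, d (some i) • A k i
      have h2 : (0:ℝ) = lam * (-β k) + ∑ i, x i * A k i := by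
        convert this using 2 <;> simp [hlam, hx, smul_eq_mul]
      rw [show ∑ i, A k i * x i = ∑ i, x i * A k i from Finset.sum_congr rfl fun i _ => mul_comm _ _]
      linarith
    have hobj : ∑ i, c i * x i = lam * P - 1 := by
      have := happ none
      simp only [hbb, hv, PiLp.toLp_apply, Option.elim, Fintype.sum_option] at this
      have h2 : (-1:ℝ) = lam * (-P) + ∑ i, x i * c i := by
        convert this using 2 <;> simp [hlam, hx, smul_eq_mul]
      rw [show ∑ i, c i * x i = ∑ i, x i * c i from Finset.sum_congr rfl fun i _ => mul_comm _ _]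
      linarith
    have hxnn : ∀ i, 0 ≤ x i := fun i => hdnn (some i)
    have hlamnn : 0 ≤ lam := hdnn none
    rcases eq_or_lt_of_le hlamnn with hlam0 | hlampos
    · -- lam = 0 : x is a recession direction with negative cost
      have hA0 : ∀ k, ∑ i, A k i * x i = 0 := by
        intro k; rw [hconstr k, ← hlam0, zero_mul]
      have hc0 : ∑ i, c i * x i = -1 := by
        rw [hobj, ← hlam0]; ring
      have hfeas : (∑ i, c i * (x₀ i + x i)) ∈ {y | ∃ x : ι → ℝ, (∀ i, 0 ≤ x i) ∧
          (∀ k, ∑ i, A k i * x i = β k) ∧ y = ∑ i, c i * x i} := by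
        refine ⟨fun i => x₀ i + x i, fun i => add_nonneg (hx₀nn i) (hxnn i), fun k => ?_, rfl⟩
        rw [show ∑ i, A k i * (x₀ i + x i) = (∑ i, A k i * x₀ i) + ∑ i, A k i * x i by
          rw [← Finset.sum_add_distrib]; exact Finset.sum_congr rfl fun i _ => by ring]
        rw [hx₀feas k, hA0 k, add_zero]
      have := hlb hfeas
      rw [show ∑ i, c i * (x₀ i + x i) = (∑ i, c i * x₀ i) + ∑ i, c i * x i by
        rw [← Finset.sum_add_distrib]; exact Finset.sum_congr rfl fun i _ => by ring,
        ← hx₀obj, hc0] at this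
      linarith
    · -- lam > 0 : x/lam is feasible with objective < P
      have hfeas : (∑ i, c i * (x i / lam)) ∈ {y | ∃ x : ι → ℝ, (∀ i, 0 ≤ x i) ∧
          (∀ k, ∑ i, A k i * x i = β k) ∧ y = ∑ i, c i * x i} := by
        refine ⟨fun i => x i / lam, fun i => div_nonneg (hxnn i) hlamnn, fun k => ?_, rfl⟩
        rw [show ∑ i, A k i * (x i / lam) = (∑ i, A k i * x i) / lam by
          rw [Finset.sum_div]; exact Finset.sum_congr rfl fun i _ => by ring]
        rw [hconstr k]
        field_simp
      have := hlb hfeas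
      rw [show ∑ i, c i * (x i / lam) = (∑ i, c i * x i) / lam by
        rw [Finset.sum_div]; exact Finset.sum_congr rfl fun i _ => by ring,
        hobj] at this
      rw [le_div_iff₀ hlampos] at this
      nlinarith
  obtain ⟨y, hy1, hy2⟩ := farkas_cone v bb hmem
  have hinner : ∀ (w : E), ⟪w, y⟫_ℝ = ∑ t, w t * y t := by
    intro w
    rw [PiLp.inner_apply]
    exact Finset.sum_congr rfl fun t _ => by simp [mul_comm]
  have hyneg : y none < 0 := by
    have := hy2
    rw [hinner] at this
    simp only [hbb, PiLp.toLp_apply, Option.elim, Fintype.sum_option] at this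
    simp only [zero_mul, Finset.sum_const_zero, add_zero] at this
    linarith
  set τ := -y none with hτ
  clear_value τ
  have hτpos : 0 < τ := by rw [hτ]; linarith
  refine ⟨fun k => y (some k) / τ, ?_, ?_⟩
  · intro i
    have := hy1 (some i)
    rw [hinner] at this
    simp only [hv, PiLp.toLp_apply, Option.elim, Fintype.sum_option] at this
    -- this : c i * y none + ∑ k, A k i * y (some k) ≤ 0
    have h2 : ∑ k, A k i * (y (some k) / τ) = (∑ k, A k i * y (some k)) / τ := by
      rw [Finset.sum_div]; exact Finset.sum_congr rfl fun k _ => by ring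
    rw [h2, div_le_iff₀ hτpos, hτ]
    linarith [this]
  · -- equality via weak duality and the farkas inequality
    have hge : P ≤ ∑ k, β k * (y (some k) / τ) := by
      have := hy1 none
      rw [hinner] at this
      simp only [hv, PiLp.toLp_apply, Option.elim, Fintype.sum_option] at this
      have h2 : ∑ k, β k * (y (some k) / τ) = (∑ k, β k * y (some k)) / τ := by
        rw [Finset.sum_div]; exact Finset.sum_congr rfl fun k _ => by ring
      rw [h2, le_div_iff₀ hτpos, hτ]
      have h3 : ∑ k, -β k * y (some k) = -∑ k, β k * y (some k) := by
        rw [← Finset.sum_neg_distrib]; exact Finset.sum_congr rfl fun k _ => by ring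
      linarith [this, h3]
    have hle : ∑ k, β k * (y (some k) / τ) ≤ P := by
      set u := fun k => y (some k) / τ with hu
      have hAu : ∀ i, ∑ k, A k i * u k ≤ c i := by
        intro i
        have := hy1 (some i)
        rw [hinner] at this
        simp only [hv, PiLp.toLp_apply, Option.elim, Fintype.sum_option] at this
        have h2 : ∑ k, A k i * u k = (∑ k, A k i * y (some k)) / τ := by
          simp only [hu]
          rw [Finset.sum_div]; exact Finset.sum_congr rfl fun k _ => by ring
        rw [h2, div_le_iff₀ hτpos, hτ]
        linarith [this]
      calc ∑ k, β k * u k = ∑ k, (∑ i, A k i * x₀ i) * u k := by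
            exact Finset.sum_congr rfl fun k _ => by rw [hx₀feas k]
        _ = ∑ k, ∑ i, x₀ i * (A k i * u k) := Finset.sum_congr rfl fun k _ => by
            rw [Finset.sum_mul]; exact Finset.sum_congr rfl fun i _ => by ring
        _ = ∑ i, ∑ k, x₀ i * (A k i * u k) := Finset.sum_comm
        _ = ∑ i, x₀ i * (∑ k, A k i * u k) := Finset.sum_congr rfl fun i _ =>
            (Finset.mul_sum _ _ _).symm
        _ ≤ ∑ i, x₀ i * c i := by
            apply Finset.sum_le_sum
            intro i _
            exact mul_le_mul_of_nonneg_left (hAu i) (hx₀nn i)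
        _ = P := by
            rw [hx₀obj]
            exact Finset.sum_congr rfl fun i _ => mul_comm _ _
    linarith

section Helpers

private lemma ind_mul_collapse {γ : Type*} [Fintype γ] [DecidableEq γ] (a : γ) (F : γ → ℝ) :
    ∑ c, (if c = a then 1 else 0) * F c = F a := by
  simp [ite_mul]

private lemma ind_mul_collapse' {γ : Type*} [Fintype γ] [DecidableEq γ] (a : γ) (F : γ → ℝ) :
    ∑ c, (if a = c then 1 else 0) * F c = F a := by
  simp [ite_mul]

private lemma sum_sum_ind {γ δ : Type*} [Fintype γ] [DecidableEq γ] [Fintype δ]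
    (a : γ) (F : γ → δ → ℝ) :
    ∑ c, ∑ d, (if c = a then 1 else 0) * F c d = ∑ d, F a d := by
  have h : ∀ c, ∑ d, (if c = a then 1 else 0) * F c d = (if c = a then 1 else 0) * ∑ d, F c d :=
    fun c => (Finset.mul_sum _ _ _).symm
  rw [Finset.sum_congr rfl fun c _ => h c]
  exact ind_mul_collapse a _

private lemma sum_sum_ind' {γ δ : Type*} [Fintype γ] [DecidableEq γ] [Fintype δ]
    (a : γ) (F : γ → δ → ℝ) :
    ∑ c, ∑ d, (if a = c then 1 else 0) * F c d = ∑ d, F a d := by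
  have h : ∀ c, ∑ d, (if a = c then 1 else 0) * F c d = (if a = c then 1 else 0) * ∑ d, F c d :=
    fun c => (Finset.mul_sum _ _ _).symm
  rw [Finset.sum_congr rfl fun c _ => h c]
  exact ind_mul_collapse' a _

private lemma sum_ind_mem {γ : Type*} [Fintype γ] [DecidableEq γ] (t : Finset γ) (F : γ → ℝ) :
    ∑ c, (if c ∈ t then 1 else 0) * F c = ∑ c ∈ t, F c := by
  simp [ite_mul, Finset.sum_ite_mem]

private lemma sum_ind_filter {γ : Type*} [Fintype γ] (q : γ → Prop) [DecidablePred q]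
    (F : γ → ℝ) :
    ∑ c, (if q c then 1 else 0) * F c = ∑ c ∈ Finset.univ.filter q, F c := by
  rw [Finset.sum_filter]
  simp [ite_mul]

private lemma ind_and_split (Pp Q : Prop) [Decidable Pp] [Decidable Q] (r : ℝ) :
    (if Pp ∧ Q then r else 0) = (if Pp then 1 else 0) * (if Q then r else 0) := by
  by_cases h1 : Pp <;> by_cases h2 : Q <;> simp [h1, h2]

private lemma ind_and_split' (Pp Q : Prop) [Decidable Pp] [Decidable Q] (r : ℝ) :
    (if Pp ∧ Q then r else 0) = (if Q then 1 else 0) * (if Pp then r else 0) := by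
  by_cases h1 : Pp <;> by_cases h2 : Q <;> simp [h1, h2]

private lemma sum_indneg_filter {γ : Type*} [Fintype γ] (q : γ → Prop) [DecidablePred q]
    (F : γ → ℝ) :
    ∑ c, (if q c then (-1 : ℝ) else 0) * F c = -∑ c ∈ Finset.univ.filter q, F c := by
  rw [← sum_ind_filter q F, ← Finset.sum_neg_distrib]
  exact Finset.sum_congr rfl fun c _ => by by_cases h : q c <;> simp [h]

private lemma ind_and_split2 (Pp Q : Prop) [Decidable Pp] [Decidable Q] (r : ℝ) :
    (if Pp ∧ Q then r else 0) = (if Q then r else 0) * (if Pp then 1 else 0) := by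
  by_cases h1 : Pp <;> by_cases h2 : Q <;> simp [h1, h2]

private lemma sum_indneg_collapse' {γ : Type*} [Fintype γ] [DecidableEq γ] (a : γ) (F : γ → ℝ) :
    ∑ c, (if a = c then (-1 : ℝ) else 0) * F c = -F a := by
  simp [ite_mul]

end Helpers

/-- Strong duality for the joint LP decoding problem (Problem-P vs Problem-D1). -/
theorem joint_LP_strong_duality
    (N M O : ℕ) (hO : 0 < O) (S : Type) [Fintype S] [DecidableEq S] [Nonempty S]
    (Nb : Fin M → Finset (Fin N))          -- neighborhood N(j) of check j
    (x : Fin O → Bool)                      -- input label of each trellis edge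
    (s s' : Fin O → S)                      -- initial / final state of each edge
    (b : Fin N → Fin O → ℝ)                 -- branch metrics
    (p : Fin N)                             -- time of the single normalization
    (P : ℝ)
    (hprimal : IsLeast
      {y : ℝ | ∃ g : Fin N → Fin O → ℝ, ∃ w : Fin M → Finset (Fin N) → ℝ,
        (∀ i e, 0 ≤ g i e) ∧
        (∀ j, ∀ B ∈ (Nb j).powerset.filter (fun B => Even B.card), 0 ≤ w j B) ∧
        (∀ j, ∑ B ∈ (Nb j).powerset.filter (fun B => Even B.card), w j B = 1) ∧
        (∑ e, g p e = 1) ∧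
        (∀ i : Fin N, ∀ j : Fin M, i ∈ Nb j →
          ∑ B ∈ ((Nb j).powerset.filter (fun B => Even B.card)).filter
              (fun B => i ∈ B), w j B
            = ∑ e ∈ Finset.univ.filter (fun e => x e = true), g i e) ∧
        (∀ i : Fin N, ∀ h : i.1 + 1 < N, ∀ k : S,
          ∑ e ∈ Finset.univ.filter (fun e => s' e = k), g i e
            = ∑ e ∈ Finset.univ.filter (fun e => s e = k), g ⟨i.1 + 1, h⟩ e) ∧
        y = ∑ i, ∑ e, b i e * g i e} P) :
    IsGreatest
      {y : ℝ | ∃ mm : Fin N → Fin M → ℝ, ∃ n : Fin (N + 1) → S → ℝ,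
        (∀ k, n 0 k = 0) ∧ (∀ k, n (Fin.last N) k = 0) ∧
        (∀ i : Fin N, i ≠ p → ∀ e : Fin O,
          b i e - (if x e then ∑ j ∈ Finset.univ.filter (fun j => i ∈ Nb j), mm i j
                    else 0)
            ≥ n i.castSucc (s e) - n i.succ (s' e)) ∧
        y = (∑ j, ((Nb j).powerset.filter (fun B => Even B.card)).inf'
              ⟨∅, by simp⟩ (fun B => ∑ i ∈ B, mm i j))
          + Finset.univ.inf'
              (Finset.univ_nonempty_iff.mpr (Fin.pos_iff_nonempty.mp hO))
              (fun e => b p e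
                - (if x e then ∑ j ∈ Finset.univ.filter (fun j => p ∈ Nb j), mm p j
                    else 0)
                - n p.castSucc (s e) + n p.succ (s' e))} P := by
  classical
  have hN0 : 0 < N := p.pos
  set EJ : Fin M → Finset (Finset (Fin N)) :=
    fun j => (Nb j).powerset.filter (fun B => Even B.card) with hEJ
  have hEJne : ∀ j, (EJ j).Nonempty := fun j =>
    ⟨∅, by simp [hEJ]⟩
  have hEJsub : ∀ j B, B ∈ EJ j → B ⊆ Nb j := fun j B hB =>
    Finset.mem_powerset.mp (Finset.mem_filter.mp hB).1
  have hOne : (Finset.univ : Finset (Fin O)).Nonempty :=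
    Finset.univ_nonempty_iff.mpr (Fin.pos_iff_nonempty.mp hO)
  obtain ⟨hPmem, hlb⟩ := hprimal
  obtain ⟨g₀, w₀, hg₀nn, hw₀nn, hw₀sum, hg₀p, hcons₀, hflow₀, hobj₀⟩ := hPmem
  have hw₀sum' : ∀ j, ∑ B ∈ EJ j, w₀ j B = 1 := hw₀sum
  have hw₀nn' : ∀ j, ∀ B ∈ EJ j, 0 ≤ w₀ j B := hw₀nn
  have hcons' : ∀ (i : Fin N) (j : Fin M), i ∈ Nb j →
      ∑ B ∈ (EJ j).filter (fun B => i ∈ B), w₀ j B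
        = ∑ e ∈ Finset.univ.filter (fun e => x e = true), g₀ i e := hcons₀
  -- ==================== WEAK DUALITY ====================
  have hub : ∀ (mm : Fin N → Fin M → ℝ) (nn : Fin (N + 1) → S → ℝ),
      (∀ k, nn 0 k = 0) → (∀ k, nn (Fin.last N) k = 0) →
      (∀ i : Fin N, i ≠ p → ∀ e : Fin O,
        b i e - (if x e then ∑ j ∈ Finset.univ.filter (fun j => i ∈ Nb j), mm i j else 0)
          ≥ nn i.castSucc (s e) - nn i.succ (s' e)) →
      ((∑ j, (EJ j).inf' (hEJne j) (fun B => ∑ i ∈ B, mm i j))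
        + Finset.univ.inf' hOne
            (fun e => b p e
              - (if x e then ∑ j ∈ Finset.univ.filter (fun j => p ∈ Nb j), mm p j else 0)
              - nn p.castSucc (s e) + nn p.succ (s' e))) ≤ P := by
    intro mm nn h0 hNlast hfeas
    set W : Fin N → ℝ :=
      fun i => ∑ j ∈ Finset.univ.filter (fun j => i ∈ Nb j), mm i j with hW
    set GX : Fin N → ℝ :=
      fun i => ∑ e ∈ Finset.univ.filter (fun e => x e = true), g₀ i e with hGX
    have hWd : ∀ i, W i = ∑ j ∈ Finset.univ.filter (fun j => i ∈ Nb j), mm i j :=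
      fun i => by rw [hW]
    have hGXd : ∀ i, GX i = ∑ e ∈ Finset.univ.filter (fun e => x e = true), g₀ i e :=
      fun i => by rw [hGX]
    show (∑ j, (EJ j).inf' (hEJne j) (fun B => ∑ i ∈ B, mm i j))
        + Finset.univ.inf' hOne
            (fun e => b p e - (if x e then W p else 0)
              - nn p.castSucc (s e) + nn p.succ (s' e)) ≤ P
    have hfeas' : ∀ i : Fin N, i ≠ p → ∀ e : Fin O,
        b i e - (if x e then W i else 0) ≥ nn i.castSucc (s e) - nn i.succ (s' e) := by
      intro i hi e
      rw [hWd i]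
      exact hfeas i hi e
    -- Step A : the check-node part
    have hA : (∑ j, (EJ j).inf' (hEJne j) (fun B => ∑ i ∈ B, mm i j))
        ≤ ∑ i, W i * GX i := by
      have hA1 : ∀ j, (EJ j).inf' (hEJne j) (fun B => ∑ i ∈ B, mm i j)
          ≤ ∑ B ∈ EJ j, w₀ j B * (∑ i ∈ B, mm i j) := by
        intro j
        have h1 : (EJ j).inf' (hEJne j) (fun B => ∑ i ∈ B, mm i j)
            = ∑ B ∈ EJ j, w₀ j B * (EJ j).inf' (hEJne j) (fun B => ∑ i ∈ B, mm i j) := by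
          rw [← Finset.sum_mul, hw₀sum' j, one_mul]
        rw [h1]
        exact Finset.sum_le_sum fun B hB =>
          mul_le_mul_of_nonneg_left (Finset.inf'_le _ hB) (hw₀nn' j B hB)
      have hA2 : ∀ j, ∑ B ∈ EJ j, w₀ j B * (∑ i ∈ B, mm i j)
          = ∑ i ∈ Nb j, mm i j * GX i := by
        intro j
        have h1 : ∀ B ∈ EJ j, w₀ j B * (∑ i ∈ B, mm i j)
            = ∑ i ∈ Nb j, (if i ∈ B then w₀ j B * mm i j else 0) := by
          intro B hB
          rw [Finset.sum_ite_mem, Finset.inter_eq_right.mpr (hEJsub j B hB),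
            Finset.mul_sum]
        rw [Finset.sum_congr rfl h1, Finset.sum_comm]
        refine Finset.sum_congr rfl fun i hi => ?_
        rw [← Finset.sum_filter, ← Finset.sum_mul, hcons' i j hi, ← hGXd i, mul_comm]
      have hA3 : ∑ j, ∑ i ∈ Nb j, mm i j * GX i = ∑ i, W i * GX i := by
        have h1 : ∀ j, ∑ i ∈ Nb j, mm i j * GX i
            = ∑ i, (if i ∈ Nb j then mm i j * GX i else 0) := by
          intro j
          rw [Finset.sum_ite_mem, Finset.univ_inter]
        rw [Finset.sum_congr rfl fun j _ => h1 j, Finset.sum_comm]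
        refine Finset.sum_congr rfl fun i _ => ?_
        rw [← Finset.sum_filter, ← Finset.sum_mul]
      calc ∑ j, (EJ j).inf' (hEJne j) (fun B => ∑ i ∈ B, mm i j)
          ≤ ∑ j, ∑ B ∈ EJ j, w₀ j B * (∑ i ∈ B, mm i j) :=
            Finset.sum_le_sum fun j _ => hA1 j
        _ = ∑ j, ∑ i ∈ Nb j, mm i j * GX i := Finset.sum_congr rfl fun j _ => hA2 j
        _ = ∑ i, W i * GX i := hA3
    have hA' : ∑ i, W i * GX i = ∑ i, ∑ e, (if x e = true then W i else 0) * g₀ i e := by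
      refine Finset.sum_congr rfl fun i _ => Eq.symm ?_
      calc ∑ e, (if x e = true then W i else 0) * g₀ i e
          = ∑ e, (if x e = true then W i * g₀ i e else 0) :=
            Finset.sum_congr rfl fun e _ => by by_cases hx : x e = true <;> simp [hx]
        _ = ∑ e ∈ Finset.univ.filter (fun e => x e = true), W i * g₀ i e :=
            (Finset.sum_filter _ _).symm
        _ = W i * GX i := by rw [hGXd i]; exact (Finset.mul_sum _ _ _).symm
    -- Step B : the trellis part
    set T : Fin N → ℝ := fun i => ∑ e, g₀ i e *
      (b i e - (if x e then W i else 0) - nn i.castSucc (s e) + nn i.succ (s' e)) with hT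
    have hTd : ∀ i, T i = ∑ e, g₀ i e *
        (b i e - (if x e then W i else 0) - nn i.castSucc (s e) + nn i.succ (s' e)) :=
      fun i => by rw [hT]
    have hBp : Finset.univ.inf' hOne
        (fun e => b p e - (if x e then W p else 0)
          - nn p.castSucc (s e) + nn p.succ (s' e)) ≤ T p := by
      have h1 : Finset.univ.inf' hOne
          (fun e => b p e - (if x e then W p else 0)
            - nn p.castSucc (s e) + nn p.succ (s' e))
          = ∑ e, g₀ p e * Finset.univ.inf' hOne
            (fun e => b p e - (if x e then W p else 0)
              - nn p.castSucc (s e) + nn p.succ (s' e)) := by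
        rw [← Finset.sum_mul, hg₀p, one_mul]
      rw [h1, hTd p]
      exact Finset.sum_le_sum fun e _ =>
        mul_le_mul_of_nonneg_left (Finset.inf'_le _ (Finset.mem_univ e)) (hg₀nn p e)
    have hBi : ∀ i : Fin N, i ≠ p → 0 ≤ T i := by
      intro i hi
      rw [hTd i]
      refine Finset.sum_nonneg fun e _ => mul_nonneg (hg₀nn i e) ?_
      have := hfeas' i hi e
      linarith
    have hB : Finset.univ.inf' hOne
        (fun e => b p e - (if x e then W p else 0)
          - nn p.castSucc (s e) + nn p.succ (s' e)) ≤ ∑ i, T i := by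
      rw [← Finset.add_sum_erase _ T (Finset.mem_univ p)]
      have h2 : 0 ≤ ∑ i ∈ Finset.univ.erase p, T i :=
        Finset.sum_nonneg fun i hi => hBi i (Finset.mem_erase.mp hi).1
      linarith
    -- Step C : combine
    have hcomb : (∑ i, ∑ e, (if x e = true then W i else 0) * g₀ i e) + (∑ i, T i)
        = (∑ i, ∑ e, b i e * g₀ i e)
          + ∑ i, ∑ e, g₀ i e * (nn i.succ (s' e) - nn i.castSucc (s e)) := by
      rw [← Finset.sum_add_distrib, ← Finset.sum_add_distrib]
      refine Finset.sum_congr rfl fun i _ => ?_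
      rw [hTd i]
      rw [← Finset.sum_add_distrib, ← Finset.sum_add_distrib]
      refine Finset.sum_congr rfl fun e _ => ?_
      ring
    -- Step D : telescoping
    have hsucc : ∀ (i : Fin N) (h : i.1 + 1 < N + 1), (⟨i.1 + 1, h⟩ : Fin (N + 1)) = i.succ :=
      fun i h => by ext; simp
    have hcast : ∀ (i : Fin N) (h : i.1 < N + 1), (⟨i.1, h⟩ : Fin (N + 1)) = i.castSucc :=
      fun i h => by ext; simp
    have hTEL : ∑ i : Fin N, ∑ e, g₀ i e * (nn i.succ (s' e) - nn i.castSucc (s e)) = 0 := by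
      set nv : ℕ → S → ℝ := fun t k => if h : t < N + 1 then nn ⟨t, h⟩ k else 0 with hnv
      set gv : ℕ → Fin O → ℝ := fun t e => if h : t < N then g₀ ⟨t, h⟩ e else 0 with hgv
      set av : ℕ → ℝ := fun t => ∑ k, nv t k *
        ∑ e ∈ Finset.univ.filter (fun e => s e = k), gv t e with hav
      set bv : ℕ → ℝ := fun t => ∑ k, nv (t + 1) k *
        ∑ e ∈ Finset.univ.filter (fun e => s' e = k), gv t e with hbv
      have hnv1 : ∀ (i : Fin N) k, nv (i.1 + 1) k = nn i.succ k := by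
        intro i k
        simp only [hnv]
        rw [dif_pos (by omega : i.1 + 1 < N + 1), hsucc]
      have hnv2 : ∀ (i : Fin N) k, nv i.1 k = nn i.castSucc k := by
        intro i k
        simp only [hnv]
        rw [dif_pos (by omega : i.1 < N + 1), hcast]
      have hgv1 : ∀ (i : Fin N) e, gv i.1 e = g₀ i e := by
        intro i e
        simp only [hgv]
        rw [dif_pos i.2]
      have hterm : ∀ i : Fin N,
          ∑ e, g₀ i e * (nn i.succ (s' e) - nn i.castSucc (s e)) = bv i.1 - av i.1 := by
        intro i
        have h1 : ∑ e, g₀ i e * nn i.succ (s' e)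
            = ∑ k, nv (i.1 + 1) k * ∑ e ∈ Finset.univ.filter (fun e => s' e = k), gv i.1 e := by
          rw [← Finset.sum_fiberwise Finset.univ s' (fun e => g₀ i e * nn i.succ (s' e))]
          refine Finset.sum_congr rfl fun k _ => ?_
          rw [hnv1, Finset.mul_sum]
          refine Finset.sum_congr rfl fun e he => ?_
          rw [(Finset.mem_filter.mp he).2, hgv1]
          ring
        have h2 : ∑ e, g₀ i e * nn i.castSucc (s e)
            = ∑ k, nv i.1 k * ∑ e ∈ Finset.univ.filter (fun e => s e = k), gv i.1 e := by
          rw [← Finset.sum_fiberwise Finset.univ s (fun e => g₀ i e * nn i.castSucc (s e))]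
          refine Finset.sum_congr rfl fun k _ => ?_
          rw [hnv2, Finset.mul_sum]
          refine Finset.sum_congr rfl fun e he => ?_
          rw [(Finset.mem_filter.mp he).2, hgv1]
          ring
        have h3 : ∑ e, g₀ i e * (nn i.succ (s' e) - nn i.castSucc (s e))
            = (∑ e, g₀ i e * nn i.succ (s' e)) - ∑ e, g₀ i e * nn i.castSucc (s e) := by
          rw [← Finset.sum_sub_distrib]
          exact Finset.sum_congr rfl fun e _ => by ring
        rw [h3, h1, h2]
      have hshift : ∀ t : ℕ, bv t = av (t + 1) := by
        intro t
        by_cases h1 : t + 1 < N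
        · simp only [hbv, hav]
          refine Finset.sum_congr rfl fun k _ => ?_
          congr 1
          have hflow := hflow₀ ⟨t, by omega⟩ (by simpa using h1) k
          have e1 : ∀ e, gv t e = g₀ ⟨t, by omega⟩ e := fun e => by
            simp only [hgv]; rw [dif_pos (by omega : t < N)]
          have e2 : ∀ e, gv (t + 1) e = g₀ ⟨t + 1, h1⟩ e := fun e => by
            simp only [hgv]; rw [dif_pos h1]
          rw [Finset.sum_congr rfl fun e _ => e1 e, Finset.sum_congr rfl fun e _ => e2 e]
          exact hflow
        · have hbv0 : bv t = 0 := by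
            rw [hbv]
            refine Finset.sum_eq_zero fun k _ => ?_
            have : nv (t + 1) k = 0 := by
              simp only [hnv]
              by_cases h2 : t + 1 < N + 1
              · rw [dif_pos h2]
                have : (⟨t + 1, h2⟩ : Fin (N + 1)) = Fin.last N := by
                  ext; simp; omega
                rw [this]
                exact hNlast k
              · rw [dif_neg h2]
            rw [this, zero_mul]
          have hav0 : av (t + 1) = 0 := by
            simp only [hav]
            refine Finset.sum_eq_zero fun k _ => ?_
            have : ∀ e, gv (t + 1) e = 0 := fun e => by
              simp only [hgv]; rw [dif_neg h1]
            rw [Finset.sum_congr rfl fun e _ => this e, Finset.sum_const_zero, mul_zero]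
          rw [hbv0, hav0]
      have hav00 : av 0 = 0 := by
        simp only [hav]
        refine Finset.sum_eq_zero fun k _ => ?_
        have : nv 0 k = 0 := by
          simp only [hnv]
          rw [dif_pos (by omega : 0 < N + 1)]
          have : (⟨0, by omega⟩ : Fin (N + 1)) = 0 := by ext; simp
          rw [this]
          exact h0 k
        rw [this, zero_mul]
      have havN : av N = 0 := by
        simp only [hav]
        refine Finset.sum_eq_zero fun k _ => ?_
        have : ∀ e, gv N e = 0 := fun e => by
          simp only [hgv]; rw [dif_neg (lt_irrefl N)]
        rw [Finset.sum_congr rfl fun e _ => this e, Finset.sum_const_zero, mul_zero]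
      calc ∑ i : Fin N, ∑ e, g₀ i e * (nn i.succ (s' e) - nn i.castSucc (s e))
          = ∑ i : Fin N, (bv i.1 - av i.1) := Finset.sum_congr rfl fun i _ => hterm i
        _ = ∑ t ∈ Finset.range N, (bv t - av t) :=
            Fin.sum_univ_eq_sum_range (fun t => bv t - av t) N
        _ = ∑ t ∈ Finset.range N, (av (t + 1) - av t) :=
            Finset.sum_congr rfl fun t _ => by rw [hshift t]
        _ = av N - av 0 := Finset.sum_range_sub av N
        _ = 0 := by rw [hav00, havN, sub_zero]
    -- put the pieces together
    have hobj' : ∑ i, ∑ e, b i e * g₀ i e = P := hobj₀.symm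
    linarith [hA, hB, hA', hcomb, hTEL, hobj']
  -- ==================== STRONG DUALITY ====================
  set A : (Fin M ⊕ (Unit ⊕ ((Fin N × Fin M) ⊕ (Fin N × S)))) →
      ((Fin N × Fin O) ⊕ (Fin M × Finset (Fin N))) → ℝ :=
    Sum.elim
      (fun j => Sum.elim (fun _ => (0 : ℝ))
        (fun q => (if q.1 = j then 1 else 0) * (if q.2 ∈ EJ j then 1 else 0)))
      (Sum.elim
        (fun _ => Sum.elim (fun c => if c.1 = p then (1 : ℝ) else 0) (fun _ => 0))
        (Sum.elim
          (fun r => Sum.elim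
            (fun c => (if c.1 = r.1 then 1 else 0) *
              (if r.1 ∈ Nb r.2 ∧ x c.2 = true then (-1 : ℝ) else 0))
            (fun q => (if q.1 = r.2 then 1 else 0) *
              (if r.1 ∈ Nb r.2 ∧ q.2 ∈ EJ r.2 ∧ r.1 ∈ q.2 then (1 : ℝ) else 0)))
          (fun r => Sum.elim
            (fun c => (if c.1 = r.1 then 1 else 0) *
                (if r.1.1 + 1 < N ∧ s' c.2 = r.2 then (1 : ℝ) else 0)
              + (if c.1.1 = r.1.1 + 1 then 1 else 0) * (if s c.2 = r.2 then (-1 : ℝ) else 0))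
            (fun _ => 0)))) with hAdef
  set βv : (Fin M ⊕ (Unit ⊕ ((Fin N × Fin M) ⊕ (Fin N × S)))) → ℝ :=
    Sum.elim (fun _ => 1) (Sum.elim (fun _ => 1) (fun _ => 0)) with hβdef
  set cc : ((Fin N × Fin O) ⊕ (Fin M × Finset (Fin N))) → ℝ :=
    Sum.elim (fun c => b c.1 c.2) (fun _ => 0) with hccdef
  -- row computations
  have hrow1 : ∀ (xv : ((Fin N × Fin O) ⊕ (Fin M × Finset (Fin N))) → ℝ) (j : Fin M),
      ∑ i, A (.inl j) i * xv i = ∑ B ∈ EJ j, xv (.inr (j, B)) := by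
    intro xv j
    rw [Fintype.sum_sum_type]
    have h1 : ∑ c : Fin N × Fin O, A (.inl j) (.inl c) * xv (.inl c) = 0 := by
      apply Finset.sum_eq_zero
      intro c _
      simp [hAdef]
    have h2 : ∑ q : Fin M × Finset (Fin N), A (.inl j) (.inr q) * xv (.inr q)
        = ∑ B ∈ EJ j, xv (.inr (j, B)) := by
      simp only [Fintype.sum_prod_type, hAdef, Sum.elim_inl, Sum.elim_inr, mul_assoc]
      rw [sum_sum_ind j
        (fun j' B => (if B ∈ EJ j then 1 else 0) * xv (.inr (j', B)))]
      exact sum_ind_mem (EJ j) (fun B => xv (.inr (j, B)))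
    rw [h1, h2, zero_add]
  have hrow2 : ∀ (xv : ((Fin N × Fin O) ⊕ (Fin M × Finset (Fin N))) → ℝ),
      ∑ i, A (.inr (.inl ())) i * xv i = ∑ e, xv (.inl (p, e)) := by
    intro xv
    rw [Fintype.sum_sum_type]
    have h2 : ∑ q : Fin M × Finset (Fin N), A (.inr (.inl ())) (.inr q) * xv (.inr q) = 0 := by
      apply Finset.sum_eq_zero
      intro q _
      simp [hAdef]
    have h1 : ∑ c : Fin N × Fin O, A (.inr (.inl ())) (.inl c) * xv (.inl c)
        = ∑ e, xv (.inl (p, e)) := by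
      simp only [Fintype.sum_prod_type, hAdef, Sum.elim_inl, Sum.elim_inr]
      exact sum_sum_ind p (fun i e => xv (.inl (i, e)))
    rw [h1, h2, add_zero]
  have hrow3 : ∀ (xv : ((Fin N × Fin O) ⊕ (Fin M × Finset (Fin N))) → ℝ)
      (i₀ : Fin N) (j : Fin M),
      ∑ i, A (.inr (.inr (.inl (i₀, j)))) i * xv i
        = if i₀ ∈ Nb j then
            ((∑ B ∈ (EJ j).filter (fun B => i₀ ∈ B), xv (.inr (j, B)))
              - ∑ e ∈ Finset.univ.filter (fun e => x e = true), xv (.inl (i₀, e)))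
          else 0 := by
    intro xv i₀ j
    rw [Fintype.sum_sum_type]
    have h1 : ∑ c : Fin N × Fin O, A (.inr (.inr (.inl (i₀, j)))) (.inl c) * xv (.inl c)
        = (if i₀ ∈ Nb j then 1 else 0) *
            -∑ e ∈ Finset.univ.filter (fun e => x e = true), xv (.inl (i₀, e)) := by
      simp only [Fintype.sum_prod_type, hAdef, Sum.elim_inl, Sum.elim_inr, mul_assoc]
      rw [sum_sum_ind i₀
        (fun i' e => (if i₀ ∈ Nb j ∧ x e = true then (-1 : ℝ) else 0) * xv (.inl (i', e)))]
      rw [Finset.sum_congr rfl fun e _ => by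
        rw [ind_and_split (i₀ ∈ Nb j) (x e = true) (-1 : ℝ), mul_assoc]]
      rw [← Finset.mul_sum]
      rw [sum_indneg_filter (fun e => x e = true) (fun e => xv (.inl (i₀, e)))]
    have h2 : ∑ q : Fin M × Finset (Fin N), A (.inr (.inr (.inl (i₀, j)))) (.inr q) * xv (.inr q)
        = (if i₀ ∈ Nb j then 1 else 0) *
            ∑ B ∈ (EJ j).filter (fun B => i₀ ∈ B), xv (.inr (j, B)) := by
      simp only [Fintype.sum_prod_type, hAdef, Sum.elim_inl, Sum.elim_inr, mul_assoc]
      rw [sum_sum_ind j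
        (fun j' B => (if i₀ ∈ Nb j ∧ B ∈ EJ j ∧ i₀ ∈ B then (1 : ℝ) else 0) * xv (.inr (j', B)))]
      rw [Finset.sum_congr rfl fun B _ => by
        rw [ind_and_split (i₀ ∈ Nb j) (B ∈ EJ j ∧ i₀ ∈ B) (1 : ℝ), mul_assoc]]
      rw [← Finset.mul_sum]
      congr 1
      rw [Finset.sum_congr rfl fun B _ => by
        rw [show (if B ∈ EJ j ∧ i₀ ∈ B then (1 : ℝ) else 0)
            = (if B ∈ (EJ j).filter (fun B => i₀ ∈ B) then (1 : ℝ) else 0) from by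
          by_cases hB : B ∈ EJ j ∧ i₀ ∈ B
          · rw [if_pos hB, if_pos (Finset.mem_filter.mpr hB)]
          · rw [if_neg hB, if_neg (fun hc => hB (Finset.mem_filter.mp hc))]]]
      exact sum_ind_mem ((EJ j).filter (fun B => i₀ ∈ B)) (fun B => xv (.inr (j, B)))
    rw [h1, h2]
    by_cases hij : i₀ ∈ Nb j <;> simp [hij] <;> ring
  have hrow4 : ∀ (xv : ((Fin N × Fin O) ⊕ (Fin M × Finset (Fin N))) → ℝ)
      (i₀ : Fin N) (k : S),
      ∑ i, A (.inr (.inr (.inr (i₀, k)))) i * xv i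
        = if h : i₀.1 + 1 < N then
            ((∑ e ∈ Finset.univ.filter (fun e => s' e = k), xv (.inl (i₀, e)))
              - ∑ e ∈ Finset.univ.filter (fun e => s e = k), xv (.inl (⟨i₀.1 + 1, h⟩, e)))
          else 0 := by
    intro xv i₀ k
    rw [Fintype.sum_sum_type]
    have h2 : ∑ q : Fin M × Finset (Fin N), A (.inr (.inr (.inr (i₀, k)))) (.inr q)
        * xv (.inr q) = 0 := by
      apply Finset.sum_eq_zero
      intro q _
      simp [hAdef]
    have h1 : ∑ c : Fin N × Fin O, A (.inr (.inr (.inr (i₀, k)))) (.inl c) * xv (.inl c)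
        = (if i₀.1 + 1 < N then 1 else 0) *
            (∑ e ∈ Finset.univ.filter (fun e => s' e = k), xv (.inl (i₀, e)))
          + (if h : i₀.1 + 1 < N then
              -∑ e ∈ Finset.univ.filter (fun e => s e = k), xv (.inl (⟨i₀.1 + 1, h⟩, e))
            else 0) := by
      simp only [Fintype.sum_prod_type, hAdef, Sum.elim_inl, Sum.elim_inr, add_mul,
        Finset.sum_add_distrib, mul_assoc]
      congr 1
      · rw [sum_sum_ind i₀
          (fun i' e => (if i₀.1 + 1 < N ∧ s' e = k then (1 : ℝ) else 0) * xv (.inl (i', e)))]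
        rw [Finset.sum_congr rfl fun e _ => by
          rw [ind_and_split (i₀.1 + 1 < N) (s' e = k) (1 : ℝ), mul_assoc]]
        rw [← Finset.mul_sum]
        congr 1
        exact sum_ind_filter (fun e => s' e = k) (fun e => xv (.inl (i₀, e)))
      · by_cases h : i₀.1 + 1 < N
        · rw [dif_pos h]
          have hiff : ∀ i' : Fin N, (i'.1 = i₀.1 + 1) ↔ (i' = ⟨i₀.1 + 1, h⟩) :=
            fun i' => ⟨fun hv => Fin.ext hv, fun he => by rw [he]⟩
          rw [Finset.sum_congr rfl fun i' _ => Finset.sum_congr rfl fun e _ => by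
            rw [if_congr (hiff i') rfl rfl]]
          rw [sum_sum_ind (⟨i₀.1 + 1, h⟩ : Fin N)
            (fun i' e => (if s e = k then (-1 : ℝ) else 0) * xv (.inl (i', e)))]
          exact sum_indneg_filter (fun e => s e = k)
            (fun e => xv (.inl (⟨i₀.1 + 1, h⟩, e)))
        · rw [dif_neg h]
          apply Finset.sum_eq_zero
          intro i' _
          apply Finset.sum_eq_zero
          intro e _
          have : ¬(i'.1 = i₀.1 + 1) := by
            have := i'.2
            omega
          simp [this]
    rw [h1, h2, add_zero]
    by_cases h : i₀.1 + 1 < N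
    · rw [dif_pos h, dif_pos h, if_pos h, one_mul]
      ring
    · rw [dif_neg h, dif_neg h, if_neg h, zero_mul, add_zero]
  have hobjrow : ∀ (xv : ((Fin N × Fin O) ⊕ (Fin M × Finset (Fin N))) → ℝ),
      ∑ i, cc i * xv i = ∑ i, ∑ e, b i e * xv (.inl (i, e)) := by
    intro xv
    rw [Fintype.sum_sum_type]
    have h2 : ∑ q : Fin M × Finset (Fin N), cc (.inr q) * xv (.inr q) = 0 := by
      apply Finset.sum_eq_zero
      intro q _
      simp [hccdef]
    rw [h2, add_zero]
    simp only [Fintype.sum_prod_type, hccdef, Sum.elim_inl]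
  -- transfer of the primal problem
  have hLmat : IsLeast {y | ∃ xv : ((Fin N × Fin O) ⊕ (Fin M × Finset (Fin N))) → ℝ,
      (∀ i, 0 ≤ xv i) ∧ (∀ k, ∑ i, A k i * xv i = βv k) ∧ y = ∑ i, cc i * xv i} P := by
    constructor
    · refine ⟨Sum.elim (fun c => g₀ c.1 c.2)
        (fun q => if q.2 ∈ EJ q.1 then w₀ q.1 q.2 else 0), ?_, ?_, ?_⟩
      · rintro (⟨i, e⟩ | ⟨j, B⟩)
        · exact hg₀nn i e
        · by_cases hB : B ∈ EJ j
          · simpa [hB] using hw₀nn' j B hB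
          · simp [hB]
      · rintro (j | u | ⟨i₀, j⟩ | ⟨i₀, k⟩)
        · rw [hrow1]
          have : ∀ B ∈ EJ j, (Sum.elim (fun c : Fin N × Fin O => g₀ c.1 c.2)
              (fun q : Fin M × Finset (Fin N) => if q.2 ∈ EJ q.1 then w₀ q.1 q.2 else 0)
              (.inr (j, B))) = w₀ j B := by
            intro B hB
            simp [hB]
          rw [Finset.sum_congr rfl this, hw₀sum' j]
          simp [hβdef]
        · rw [hrow2]
          simp only [Sum.elim_inl]
          rw [hg₀p]
          simp [hβdef]
        · rw [hrow3]
          by_cases hij : i₀ ∈ Nb j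
          · rw [if_pos hij]
            have e1 : ∀ B ∈ (EJ j).filter (fun B => i₀ ∈ B),
                (Sum.elim (fun c : Fin N × Fin O => g₀ c.1 c.2)
                  (fun q : Fin M × Finset (Fin N) => if q.2 ∈ EJ q.1 then w₀ q.1 q.2 else 0)
                  (.inr (j, B))) = w₀ j B := by
              intro B hB
              have := (Finset.mem_filter.mp hB).1
              simp [this]
            rw [Finset.sum_congr rfl e1, hcons' i₀ j hij]
            simp [hβdef]
          · rw [if_neg hij]
            simp [hβdef]
        · rw [hrow4]
          by_cases h : i₀.1 + 1 < N
          · rw [dif_pos h]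
            simp only [Sum.elim_inl]
            rw [hflow₀ i₀ h k]
            simp [hβdef]
          · rw [dif_neg h]
            simp [hβdef]
      · rw [hobjrow]
        simpa using hobj₀
    · rintro y ⟨xv, hxnn, hxfeas, rfl⟩
      apply hlb
      refine ⟨fun i e => xv (.inl (i, e)), fun j B => xv (.inr (j, B)),
        fun i e => hxnn _, fun j B _ => hxnn _, ?_, ?_, ?_, ?_, ?_⟩
      · intro j
        have := hxfeas (.inl j)
        rw [hrow1] at this
        have hβ1 : βv (.inl j) = 1 := by simp [hβdef]
        rw [hβ1] at this
        exact this
      · have := hxfeas (.inr (.inl ()))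
        rw [hrow2] at this
        have hβ1 : βv (.inr (.inl ())) = 1 := by simp [hβdef]
        rw [hβ1] at this
        exact this
      · intro i j hij
        have := hxfeas (.inr (.inr (.inl (i, j))))
        rw [hrow3, if_pos hij] at this
        have hβ0 : βv (.inr (.inr (.inl (i, j)))) = 0 := by simp [hβdef]
        rw [hβ0] at this
        exact sub_eq_zero.mp this
      · intro i h k
        have := hxfeas (.inr (.inr (.inr (i, k))))
        rw [hrow4, dif_pos h] at this
        have hβ0 : βv (.inr (.inr (.inr (i, k)))) = 0 := by simp [hβdef]
        rw [hβ0] at this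
        exact sub_eq_zero.mp this
      · exact hobjrow xv
  obtain ⟨u, hu1, hu2⟩ := lp_strong_duality A βv cc P hLmat
  -- ============ dual column computations ============
  have hcolg : ∀ (i : Fin N) (e : Fin O),
      ∑ k, A k (.inl (i, e)) * u k
        = (if i = p then 1 else 0) * u (.inr (.inl ()))
          + (if x e = true then (-1 : ℝ) else 0) *
              (∑ j ∈ Finset.univ.filter (fun j => i ∈ Nb j), u (.inr (.inr (.inl (i, j)))))
          + ((if i.1 + 1 < N then 1 else 0) * u (.inr (.inr (.inr (i, s' e))))
            + (if 0 < i.1 then 1 else 0) *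
                -u (.inr (.inr (.inr (⟨i.1 - 1, by omega⟩, s e))))) := by
    intro i e
    rw [show (∑ k, A k (.inl (i, e)) * u k)
        = (∑ j, A (.inl j) (.inl (i, e)) * u (.inl j))
          + ((∑ t : Unit, A (.inr (.inl t)) (.inl (i, e)) * u (.inr (.inl t)))
            + ((∑ r : Fin N × Fin M,
                A (.inr (.inr (.inl r))) (.inl (i, e)) * u (.inr (.inr (.inl r))))
              + ∑ r : Fin N × S,
                A (.inr (.inr (.inr r))) (.inl (i, e)) * u (.inr (.inr (.inr r))))) from by
      rw [Fintype.sum_sum_type, Fintype.sum_sum_type, Fintype.sum_sum_type]]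
    have p1 : ∑ j, A (.inl j) (.inl (i, e)) * u (.inl j) = 0 := by
      apply Finset.sum_eq_zero
      intro j _
      simp [hAdef]
    have p2 : ∑ t : Unit, A (.inr (.inl t)) (.inl (i, e)) * u (.inr (.inl t))
        = (if i = p then 1 else 0) * u (.inr (.inl ())) := by
      simp only [hAdef, Sum.elim_inl, Sum.elim_inr]
      rw [Finset.sum_eq_single_of_mem () (Finset.mem_univ ())]
      intro t _ ht
      exact absurd rfl ht
    have p3 : ∑ r : Fin N × Fin M,
        A (.inr (.inr (.inl r))) (.inl (i, e)) * u (.inr (.inr (.inl r)))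
        = (if x e = true then (-1 : ℝ) else 0) *
            ∑ j ∈ Finset.univ.filter (fun j => i ∈ Nb j), u (.inr (.inr (.inl (i, j)))) := by
      simp only [Fintype.sum_prod_type, hAdef, Sum.elim_inl, Sum.elim_inr, mul_assoc]
      rw [sum_sum_ind' i (fun i₀ j =>
        (if i₀ ∈ Nb j ∧ x e = true then (-1 : ℝ) else 0) * u (.inr (.inr (.inl (i₀, j)))))]
      rw [Finset.sum_congr rfl fun j _ => by
        rw [ind_and_split2 (i ∈ Nb j) (x e = true) (-1 : ℝ), mul_assoc]]
      rw [← Finset.mul_sum]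
      congr 1
      exact sum_ind_filter (fun j => i ∈ Nb j) (fun j => u (.inr (.inr (.inl (i, j)))))
    have p4 : ∑ r : Fin N × S,
        A (.inr (.inr (.inr r))) (.inl (i, e)) * u (.inr (.inr (.inr r)))
        = (if i.1 + 1 < N then 1 else 0) * u (.inr (.inr (.inr (i, s' e))))
          + (if 0 < i.1 then 1 else 0) *
              -u (.inr (.inr (.inr (⟨i.1 - 1, by omega⟩, s e)))) := by
      simp only [Fintype.sum_prod_type, hAdef, Sum.elim_inl, Sum.elim_inr, add_mul,
        Finset.sum_add_distrib, mul_assoc]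
      congr 1
      · rw [sum_sum_ind' i (fun i₀ kk =>
          (if i₀.1 + 1 < N ∧ s' e = kk then (1 : ℝ) else 0) * u (.inr (.inr (.inr (i₀, kk)))))]
        rw [Finset.sum_congr rfl fun kk _ => by
          rw [ind_and_split (i.1 + 1 < N) (s' e = kk) (1 : ℝ), mul_assoc]]
        rw [← Finset.mul_sum]
        congr 1
        exact ind_mul_collapse' (s' e) (fun kk => u (.inr (.inr (.inr (i, kk)))))
      · by_cases hpos : 0 < i.1
        · have hlt : i.1 - 1 < N := by omega
          have hiff : ∀ i₀ : Fin N, (i.1 = i₀.1 + 1) ↔ (i₀ = ⟨i.1 - 1, hlt⟩) := by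
            intro i₀
            constructor
            · intro hv
              apply Fin.ext
              simp
              omega
            · intro he
              rw [he]
              simp
              omega
          rw [Finset.sum_congr rfl fun i₀ _ => Finset.sum_congr rfl fun kk _ => by
            rw [if_congr (hiff i₀) rfl rfl]]
          rw [sum_sum_ind (⟨i.1 - 1, hlt⟩ : Fin N) (fun i₀ kk =>
            (if s e = kk then (-1 : ℝ) else 0) * u (.inr (.inr (.inr (i₀, kk)))))]
          rw [sum_indneg_collapse' (s e)
            (fun kk => u (.inr (.inr (.inr (⟨i.1 - 1, hlt⟩, kk)))))]
          rw [if_pos hpos, one_mul]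
        · rw [if_neg hpos, zero_mul]
          apply Finset.sum_eq_zero
          intro i₀ _
          apply Finset.sum_eq_zero
          intro kk _
          have : ¬(i.1 = i₀.1 + 1) := by omega
          simp [this]
    rw [p1, p2, p3, p4, zero_add, add_assoc]
  have hkey : ∀ (i : Fin N) (e : Fin O),
      (if i = p then 1 else 0) * u (.inr (.inl ()))
        + (if x e = true then (-1 : ℝ) else 0) *
            (∑ j ∈ Finset.univ.filter (fun j => i ∈ Nb j), u (.inr (.inr (.inl (i, j)))))
        + ((if i.1 + 1 < N then 1 else 0) * u (.inr (.inr (.inr (i, s' e))))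
          + (if 0 < i.1 then 1 else 0) *
              -u (.inr (.inr (.inr (⟨i.1 - 1, by omega⟩, s e))))) ≤ b i e := by
    intro i e
    have h := hu1 (.inl (i, e))
    rw [hcolg i e] at h
    have hc : cc (.inl (i, e)) = b i e := by simp [hccdef]
    rwa [hc] at h
  have hcolw : ∀ (j : Fin M) (B : Finset (Fin N)), B ∈ EJ j →
      ∑ k, A k (.inr (j, B)) * u k
        = u (.inl j) + ∑ i ∈ B, u (.inr (.inr (.inl (i, j)))) := by
    intro j B hB
    rw [show (∑ k, A k (.inr (j, B)) * u k)
        = (∑ j', A (.inl j') (.inr (j, B)) * u (.inl j'))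
          + ((∑ t : Unit, A (.inr (.inl t)) (.inr (j, B)) * u (.inr (.inl t)))
            + ((∑ r : Fin N × Fin M,
                A (.inr (.inr (.inl r))) (.inr (j, B)) * u (.inr (.inr (.inl r))))
              + ∑ r : Fin N × S,
                A (.inr (.inr (.inr r))) (.inr (j, B)) * u (.inr (.inr (.inr r))))) from by
      rw [Fintype.sum_sum_type, Fintype.sum_sum_type, Fintype.sum_sum_type]]
    have p1 : ∑ j', A (.inl j') (.inr (j, B)) * u (.inl j') = u (.inl j) := by
      simp only [hAdef, Sum.elim_inl, Sum.elim_inr, mul_assoc]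
      rw [ind_mul_collapse' j (fun j' =>
        (if B ∈ EJ j' then (1 : ℝ) else 0) * u (.inl j'))]
      rw [if_pos hB, one_mul]
    have p2 : ∑ t : Unit, A (.inr (.inl t)) (.inr (j, B)) * u (.inr (.inl t)) = 0 := by
      apply Finset.sum_eq_zero
      intro t _
      simp [hAdef]
    have p3 : ∑ r : Fin N × Fin M,
        A (.inr (.inr (.inl r))) (.inr (j, B)) * u (.inr (.inr (.inl r)))
        = ∑ i ∈ B, u (.inr (.inr (.inl (i, j)))) := by
      simp only [Fintype.sum_prod_type, hAdef, Sum.elim_inl, Sum.elim_inr, mul_assoc]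
      rw [Finset.sum_congr rfl fun i₀ _ => ind_mul_collapse' j (fun j' =>
        (if i₀ ∈ Nb j' ∧ B ∈ EJ j' ∧ i₀ ∈ B then (1 : ℝ) else 0)
          * u (.inr (.inr (.inl (i₀, j')))))]
      rw [Finset.sum_congr rfl fun i₀ _ => by
        rw [show (if i₀ ∈ Nb j ∧ B ∈ EJ j ∧ i₀ ∈ B then (1 : ℝ) else 0)
            = (if i₀ ∈ B then (1 : ℝ) else 0) from by
          by_cases hi₀ : i₀ ∈ B
          · rw [if_pos hi₀, if_pos ⟨hEJsub j B hB hi₀, hB, hi₀⟩]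
          · rw [if_neg hi₀, if_neg (fun hc => hi₀ hc.2.2)]]]
      exact sum_ind_mem B (fun i₀ => u (.inr (.inr (.inl (i₀, j)))))
    have p4 : ∑ r : Fin N × S,
        A (.inr (.inr (.inr r))) (.inr (j, B)) * u (.inr (.inr (.inr r))) = 0 := by
      apply Finset.sum_eq_zero
      intro r _
      simp [hAdef]
    rw [p1, p2, p3, p4, zero_add, add_zero]
  have hkeyw : ∀ (j : Fin M) (B : Finset (Fin N)), B ∈ EJ j →
      u (.inl j) + ∑ i ∈ B, u (.inr (.inr (.inl (i, j)))) ≤ 0 := by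
    intro j B hB
    have h := hu1 (.inr (j, B))
    rw [hcolw j B hB] at h
    have hc : cc (.inr (j, B)) = 0 := by simp [hccdef]
    rwa [hc] at h
  -- ============ the dual witness ============
  set mm : Fin N → Fin M → ℝ := fun i j => -u (.inr (.inr (.inl (i, j)))) with hmmd
  have hmmp : ∀ i j, mm i j = -u (.inr (.inr (.inl (i, j)))) := fun i j => by rw [hmmd]
  set nn : Fin (N + 1) → S → ℝ := fun t k =>
    if 0 < t.1 ∧ t.1 < N then -u (.inr (.inr (.inr (⟨t.1 - 1, by omega⟩, k)))) else 0 with hnnd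
  have hn0 : ∀ k, nn 0 k = 0 := by
    intro k
    simp [hnnd]
  have hnlast : ∀ k, nn (Fin.last N) k = 0 := by
    intro k
    simp [hnnd]
  have idA : ∀ i : Fin N, ∑ j ∈ Finset.univ.filter (fun j => i ∈ Nb j), mm i j
      = -∑ j ∈ Finset.univ.filter (fun j => i ∈ Nb j), u (.inr (.inr (.inl (i, j)))) := by
    intro i
    rw [← Finset.sum_neg_distrib]
  have idB : ∀ (i : Fin N) (k : S), nn i.castSucc k
      = (if 0 < i.1 then 1 else 0) *
          -u (.inr (.inr (.inr (⟨i.1 - 1, by omega⟩, k)))) := by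
    intro i k
    simp only [hnnd, Fin.coe_castSucc]
    by_cases h : 0 < i.1
    · rw [if_pos ⟨h, i.2⟩, if_pos h, one_mul]
    · rw [if_neg (fun hc => h hc.1), if_neg h, zero_mul]
  have idC : ∀ (i : Fin N) (k : S), nn i.succ k
      = (if i.1 + 1 < N then 1 else 0) * -u (.inr (.inr (.inr (i, k)))) := by
    intro i k
    simp only [hnnd, Fin.val_succ]
    by_cases h : i.1 + 1 < N
    · rw [if_pos ⟨Nat.succ_pos _, h⟩, if_pos h, one_mul]
      have he : (⟨i.1 + 1 - 1, by omega⟩ : Fin N) = i := Fin.ext (by simp)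
      rw [he]
    · rw [if_neg (fun hc => h hc.2), if_neg h, zero_mul]
  have hconstr : ∀ i : Fin N, i ≠ p → ∀ e : Fin O,
      b i e - (if x e then ∑ j ∈ Finset.univ.filter (fun j => i ∈ Nb j), mm i j else 0)
        ≥ nn i.castSucc (s e) - nn i.succ (s' e) := by
    intro i hi e
    have hk := hkey i e
    rw [if_neg hi, zero_mul, zero_add] at hk
    rw [idA i, idB i (s e), idC i (s' e)]
    by_cases hx : x e = true
    · rw [if_pos hx] at hk ⊢
      linarith
    · rw [if_neg hx] at hk ⊢
      linarith
  have hkeyp : ∀ e : Fin O, u (.inr (.inl ()))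
      ≤ b p e - (if x e then ∑ j ∈ Finset.univ.filter (fun j => p ∈ Nb j), mm p j else 0)
        - nn p.castSucc (s e) + nn p.succ (s' e) := by
    intro e
    have hk := hkey p e
    rw [if_pos rfl, one_mul] at hk
    rw [idA p, idB p (s e), idC p (s' e)]
    by_cases hx : x e = true
    · rw [if_pos hx] at hk ⊢
      linarith
    · rw [if_neg hx] at hk ⊢
      linarith
  -- ============ value of the dual witness ============
  have hβu : ∑ k, βv k * u k = (∑ j, u (.inl j)) + u (.inr (.inl ())) := by
    rw [show (∑ k, βv k * u k)
        = (∑ j, βv (.inl j) * u (.inl j))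
          + ((∑ t : Unit, βv (.inr (.inl t)) * u (.inr (.inl t)))
            + ((∑ r : Fin N × Fin M, βv (.inr (.inr (.inl r))) * u (.inr (.inr (.inl r))))
              + ∑ r : Fin N × S, βv (.inr (.inr (.inr r))) * u (.inr (.inr (.inr r))))) from by
      rw [Fintype.sum_sum_type, Fintype.sum_sum_type, Fintype.sum_sum_type]]
    have q1 : ∑ j, βv (.inl j) * u (.inl j) = ∑ j, u (.inl j) :=
      Finset.sum_congr rfl fun j _ => by simp [hβdef]
    have q2 : ∑ t : Unit, βv (.inr (.inl t)) * u (.inr (.inl t)) = u (.inr (.inl ())) := by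
      rw [Finset.sum_eq_single_of_mem () (Finset.mem_univ ())]
      · simp [hβdef]
      · intro t _ ht
        exact absurd rfl ht
    have q3 : ∑ r : Fin N × Fin M, βv (.inr (.inr (.inl r))) * u (.inr (.inr (.inl r))) = 0 :=
      Finset.sum_eq_zero fun r _ => by simp [hβdef]
    have q4 : ∑ r : Fin N × S, βv (.inr (.inr (.inr r))) * u (.inr (.inr (.inr r))) = 0 :=
      Finset.sum_eq_zero fun r _ => by simp [hβdef]
    rw [q1, q2, q3, q4, add_zero, add_zero]
  have hV1 : ∀ j, u (.inl j) ≤ (EJ j).inf' (hEJne j) (fun B => ∑ i ∈ B, mm i j) := by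
    intro j
    apply Finset.le_inf'
    intro B hB
    have h := hkeyw j B hB
    have hsum : ∑ i ∈ B, mm i j = -∑ i ∈ B, u (.inr (.inr (.inl (i, j)))) := by
      rw [← Finset.sum_neg_distrib]
    rw [hsum]
    linarith
  have hV2 : u (.inr (.inl ())) ≤ Finset.univ.inf' hOne
      (fun e => b p e
        - (if x e then ∑ j ∈ Finset.univ.filter (fun j => p ∈ Nb j), mm p j else 0)
        - nn p.castSucc (s e) + nn p.succ (s' e)) := by
    apply Finset.le_inf'
    intro e _
    exact hkeyp e
  have hPV : P ≤ (∑ j, (EJ j).inf' (hEJne j) (fun B => ∑ i ∈ B, mm i j))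
      + Finset.univ.inf' hOne
        (fun e => b p e
          - (if x e then ∑ j ∈ Finset.univ.filter (fun j => p ∈ Nb j), mm p j else 0)
          - nn p.castSucc (s e) + nn p.succ (s' e)) := by
    have h := hu2
    rw [hβu] at h
    have hle : (∑ j, u (.inl j)) + u (.inr (.inl ()))
        ≤ (∑ j, (EJ j).inf' (hEJne j) (fun B => ∑ i ∈ B, mm i j))
          + Finset.univ.inf' hOne
            (fun e => b p e
              - (if x e then ∑ j ∈ Finset.univ.filter (fun j => p ∈ Nb j), mm p j else 0)
              - nn p.castSucc (s e) + nn p.succ (s' e)) :=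
      add_le_add (Finset.sum_le_sum fun j _ => hV1 j) hV2
    linarith
  have hVP := hub mm nn hn0 hnlast hconstr
  have hVeq : (∑ j, (EJ j).inf' (hEJne j) (fun B => ∑ i ∈ B, mm i j))
      + Finset.univ.inf' hOne
        (fun e => b p e
          - (if x e then ∑ j ∈ Finset.univ.filter (fun j => p ∈ Nb j), mm p j else 0)
          - nn p.castSucc (s e) + nn p.succ (s' e)) = P :=
    le_antisymm hVP hPV
  constructor
  · exact ⟨mm, nn, hn0, hnlast, hconstr, hVeq.symm⟩
  · rintro y ⟨mm', nn', h0', hl', hf', rfl⟩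
    exact hub mm' nn' h0' hl' hf'
end
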